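/- arXiv:2207.01872 — 10 statements merged into one kernel-verified Lean document; each statement's English description precedes it below -/
import Mathlib

section
/- If Y is a real-valued random variable with distribution μ satisfying ∫_{[0,∞)} x dμ(x) < ∞, t ∈ ℝ, and φ : ℝ → ℝ is a nonnegative convex function that is strictly increasing on [t,∞) with φ(t) ≠ 0, then there exists a > 0 such that E[max{0, a(Y−t)+1}] / 1 ≤ E[φ(Y)] / φ(t), i.e. the function φ_{t,a}(x) = max{0, a(x−t)+1} satisfies E[φ_{t,a}(Y)]/φ_{t,a}(t) ≤ E[φ(Y)]/φ(t). -/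
open MeasureTheory Set

/-- If `μ` is the distribution of `Y` with `∫_{[0,∞)} x dμ < ∞`, `t ∈ ℝ`, and `φ` is a
nonnegative convex function strictly increasing on `[t,∞)` with `φ t ≠ 0`, then some
`φ_{t,a}(x) = max {0, a(x-t)+1}` with `a > 0` satisfies
`E φ_{t,a}(Y) / φ_{t,a}(t) ≤ E φ(Y) / φ(t)` (in `[0,∞]`, note `φ_{t,a}(t) = 1`). -/
theorem stmt0 (μ : Measure ℝ) [IsProbabilityMeasure μ]
    (hInt : IntegrableOn (fun x : ℝ => x) (Set.Ici 0) μ)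
    (t : ℝ) (φ : ℝ → ℝ)
    (hconv : ConvexOn ℝ Set.univ φ)
    (hnonneg : ∀ x, 0 ≤ φ x)
    (hmono : StrictMonoOn φ (Set.Ici t))
    (hφt : φ t ≠ 0) :
    ∃ a : ℝ, 0 < a ∧
      (∫⁻ x, ENNReal.ofReal (max 0 (a * (x - t) + 1)) ∂μ)
        ≤ (∫⁻ x, ENNReal.ofReal (φ x) ∂μ) / ENNReal.ofReal (φ t) := by
  have hφtpos : 0 < φ t := lt_of_le_of_ne (hnonneg t) (Ne.symm hφt)
  have hφtne : ENNReal.ofReal (φ t) ≠ 0 := (ENNReal.ofReal_pos.mpr hφtpos).ne'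
  have hφtnetop : ENNReal.ofReal (φ t) ≠ ⊤ := ENNReal.ofReal_ne_top
  -- the set of right slopes at t
  set S : Set ℝ := {r : ℝ | ∃ h : ℝ, 0 < h ∧ r = (φ (t + h) - φ t) / h} with hSdef
  have hSne : S.Nonempty := ⟨(φ (t + 1) - φ t) / 1, 1, one_pos, rfl⟩
  have hslope : ∀ h : ℝ, 0 < h → ∀ y : ℝ, y < t →
      (φ t - φ y) / (t - y) ≤ (φ (t + h) - φ t) / h := by
    intro h hh y hy
    have := hconv.slope_mono_adjacent (mem_univ y) (mem_univ (t + h)) hy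
      (by linarith : t < t + h)
    simpa using this
  have hbdd : BddBelow S := by
    refine ⟨(φ t - φ (t - 1)) / (t - (t - 1)), ?_⟩
    rintro r ⟨h, hh, rfl⟩
    exact hslope h hh (t - 1) (by linarith)
  set s : ℝ := sInf S with hsdef
  have hs0 : 0 ≤ s := by
    refine le_csInf hSne ?_
    rintro r ⟨h, hh, rfl⟩
    have : φ t < φ (t + h) := hmono (le_refl t) (by simp [hh.le] : t + h ∈ Ici t)
      (by linarith)
    exact div_nonneg (by linarith) hh.le
  have hsupp : ∀ x, s * (x - t) + φ t ≤ φ x := by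
    intro x
    rcases lt_trichotomy x t with hx | rfl | hx
    · have h1 : (φ t - φ x) / (t - x) ≤ s := by
        refine le_csInf hSne ?_
        rintro r ⟨h, hh, rfl⟩
        exact hslope h hh x hx
      have htx : (0:ℝ) < t - x := by linarith
      have h2 : φ t - φ x ≤ s * (t - x) := by
        have := (div_le_iff₀ htx).mp h1
        linarith
      nlinarith
    · simp
    · have h1 : s ≤ (φ x - φ t) / (x - t) :=
        csInf_le hbdd ⟨x - t, by linarith, by rw [show t + (x - t) = x from by ring]⟩
      have hxt : (0:ℝ) < x - t := by linarith
      have h2 : s * (x - t) ≤ φ x - φ t := (le_div_iff₀ hxt).mp h1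
      linarith
  rcases lt_or_eq_of_le hs0 with hspos | hseq
  · -- positive supporting slope: pointwise domination
    refine ⟨s / φ t, div_pos hspos hφtpos, ?_⟩
    have hpt : ∀ x, max 0 (s / φ t * (x - t) + 1) ≤ φ x / φ t := by
      intro x
      refine max_le (div_nonneg (hnonneg x) hφtpos.le) ?_
      have he : s / φ t * (x - t) + 1 = (s * (x - t) + φ t) / φ t := by
        field_simp
      rw [he]
      exact (div_le_div_iff_of_pos_right hφtpos).mpr (hsupp x)
    calc (∫⁻ x, ENNReal.ofReal (max 0 (s / φ t * (x - t) + 1)) ∂μ)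
        ≤ ∫⁻ x, ENNReal.ofReal (φ x / φ t) ∂μ :=
          lintegral_mono fun x => ENNReal.ofReal_le_ofReal (hpt x)
      _ = ∫⁻ x, ENNReal.ofReal (φ x) / ENNReal.ofReal (φ t) ∂μ := by
          simp_rw [ENNReal.ofReal_div_of_pos hφtpos]
      _ = (∫⁻ x, ENNReal.ofReal (φ x) ∂μ) / ENNReal.ofReal (φ t) := by
          simp_rw [div_eq_mul_inv]
          exact lintegral_mul_const' _ _ (by simp [hφtne])
  · -- slope 0: φ ≥ φ t everywhere, use integral slack
    have hge : ∀ x, φ t ≤ φ x := by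
      intro x
      have := hsupp x
      rw [← hseq] at this
      linarith
    set I := ∫⁻ x, ENNReal.ofReal (φ x) ∂μ with hIdef
    have hI1 : ENNReal.ofReal (φ t) ≤ I := by
      calc ENNReal.ofReal (φ t) = ∫⁻ _, ENNReal.ofReal (φ t) ∂μ := by
            simp [lintegral_const]
        _ ≤ I := lintegral_mono fun x => ENNReal.ofReal_le_ofReal (hge x)
    by_cases hItop : I = ⊤
    · refine ⟨1, one_pos, ?_⟩
      rw [hItop, ENNReal.top_div_of_ne_top hφtnetop]
      exact le_top
    set M := ∫⁻ x, ENNReal.ofReal (max 0 (x - t)) ∂μ with hMdef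
    have hMlt : M < ⊤ := by
      have hpt1 : ∀ x : ℝ, ENNReal.ofReal (max 0 (x - t))
          ≤ ENNReal.ofReal (max 0 x) + ENNReal.ofReal |t| := by
        intro x
        rw [← ENNReal.ofReal_add (le_max_left 0 x) (abs_nonneg t)]
        refine ENNReal.ofReal_le_ofReal (max_le (by positivity) ?_)
        have h1 : x ≤ max 0 x := le_max_right 0 x
        have h2 : -t ≤ |t| := neg_le_abs t
        linarith
      have hpt2 : ∀ x : ℝ, ENNReal.ofReal (max 0 x)
          ≤ (Ici (0:ℝ)).indicator (fun x => (‖x‖₊ : ENNReal)) x := by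
        intro x
        by_cases hx : x ∈ Ici (0:ℝ)
        · rw [indicator_of_mem hx, max_eq_right hx]
          exact Real.ofReal_le_enorm x
        · rw [indicator_of_notMem hx]
          simp at hx
          simp [max_eq_left hx.le]
      have hM0 : (∫⁻ x, ENNReal.ofReal (max 0 x) ∂μ) < ⊤ := by
        calc (∫⁻ x, ENNReal.ofReal (max 0 x) ∂μ)
            ≤ ∫⁻ x, (Ici (0:ℝ)).indicator (fun x => (‖x‖₊ : ENNReal)) x ∂μ :=
              lintegral_mono hpt2
          _ = ∫⁻ x in Ici (0:ℝ), (‖x‖₊ : ENNReal) ∂μ :=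
              lintegral_indicator measurableSet_Ici _
          _ < ⊤ := hInt.2
      calc M ≤ ∫⁻ x, (ENNReal.ofReal (max 0 x) + ENNReal.ofReal |t|) ∂μ :=
            lintegral_mono hpt1
        _ = (∫⁻ x, ENNReal.ofReal (max 0 x) ∂μ) + ENNReal.ofReal |t| := by
            rw [lintegral_add_right _ measurable_const, lintegral_const, measure_univ,
              mul_one]
        _ < ⊤ := ENNReal.add_lt_top.mpr ⟨hM0, ENNReal.ofReal_lt_top⟩
    have hLHS : ∀ a : ℝ, 0 < a →
        (∫⁻ x, ENNReal.ofReal (max 0 (a * (x - t) + 1)) ∂μ)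
          ≤ ENNReal.ofReal a * M + 1 := by
      intro a ha
      have hpt : ∀ x : ℝ, ENNReal.ofReal (max 0 (a * (x - t) + 1))
          ≤ ENNReal.ofReal a * ENNReal.ofReal (max 0 (x - t)) + 1 := by
        intro x
        rw [← ENNReal.ofReal_mul ha.le, ← ENNReal.ofReal_one,
          ← ENNReal.ofReal_add (by positivity) one_pos.le]
        refine ENNReal.ofReal_le_ofReal (max_le (by positivity) ?_)
        have h1 : a * (x - t) ≤ a * max 0 (x - t) :=
          mul_le_mul_of_nonneg_left (le_max_right 0 (x - t)) ha.le
        linarith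
      calc (∫⁻ x, ENNReal.ofReal (max 0 (a * (x - t) + 1)) ∂μ)
          ≤ ∫⁻ x, (ENNReal.ofReal a * ENNReal.ofReal (max 0 (x - t)) + 1) ∂μ :=
            lintegral_mono hpt
        _ = ENNReal.ofReal a * M + 1 := by
            rw [lintegral_add_right _ measurable_const, lintegral_const, measure_univ,
              mul_one, lintegral_const_mul' _ _ ENNReal.ofReal_ne_top]
    have hone_le : 1 ≤ I / ENNReal.ofReal (φ t) :=
      ENNReal.le_div_iff_mul_le (Or.inl hφtne) (Or.inl hφtnetop) |>.mpr (by simpa using hI1)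
    by_cases hM0 : M = 0
    · refine ⟨1, one_pos, ?_⟩
      calc (∫⁻ x, ENNReal.ofReal (max 0 (1 * (x - t) + 1)) ∂μ)
          ≤ ENNReal.ofReal 1 * M + 1 := hLHS 1 one_pos
        _ = 1 := by simp [hM0]
        _ ≤ I / ENNReal.ofReal (φ t) := hone_le
    · -- M > 0: there is a chunk of mass strictly to the right of t
      have hε : ∃ ε : ℝ, 0 < ε ∧ 0 < μ (Ici (t + ε)) := by
        by_contra hc
        push_neg at hc
        apply hM0
        have hnull : μ {x : ℝ | t < x} = 0 := by
          have hsub : {x : ℝ | t < x} ⊆ ⋃ n : ℕ, Ici (t + 1 / (n + 1)) := by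
            intro x hx
            obtain ⟨n, hn⟩ := exists_nat_one_div_lt (sub_pos.2 hx : (0:ℝ) < x - t)
            exact mem_iUnion.2 ⟨n, by simp only [mem_Ici]; push_cast; linarith⟩
          refine measure_mono_null hsub (measure_iUnion_null fun n => ?_)
          have := hc (1 / (n + 1)) (by positivity)
          exact le_antisymm this zero_le
        have hae : (fun x : ℝ => ENNReal.ofReal (max 0 (x - t))) =ᵐ[μ] 0 := by
          refine measure_mono_null (fun x hx => ?_) hnull
          simp only [mem_compl_iff, mem_setOf_eq, Pi.zero_apply] at hx
          simp only [mem_setOf_eq]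
          by_contra hxt
          push_neg at hxt
          apply hx
          rw [max_eq_left (by linarith : x - t ≤ 0)]
          simp
        calc M = ∫⁻ _, (0 : ENNReal) ∂μ := lintegral_congr_ae hae
          _ = 0 := lintegral_zero
      obtain ⟨ε, hεpos, hμε⟩ := hε
      set δ : ℝ := φ (t + ε) - φ t with hδdef
      have hδpos : 0 < δ :=
        sub_pos.2 (hmono (le_refl t) (by simp [hεpos.le] : t + ε ∈ Ici t) (by linarith))
      have hIgt : ENNReal.ofReal (φ t) + ENNReal.ofReal δ * μ (Ici (t + ε)) ≤ I := by
        have hpt : ∀ x : ℝ, ENNReal.ofReal (φ t)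
            + (Ici (t + ε)).indicator (fun _ => ENNReal.ofReal δ) x
            ≤ ENNReal.ofReal (φ x) := by
          intro x
          by_cases hx : x ∈ Ici (t + ε)
          · rw [indicator_of_mem hx, ← ENNReal.ofReal_add hφtpos.le hδpos.le]
            refine ENNReal.ofReal_le_ofReal ?_
            have h1 : φ (t + ε) ≤ φ x :=
              hmono.monotoneOn (by simp [hεpos.le] : t + ε ∈ Ici t)
                (by simp only [mem_Ici] at hx ⊢; linarith) hx
            simp only [hδdef]; linarith
          · rw [indicator_of_notMem hx, add_zero]
            exact ENNReal.ofReal_le_ofReal (hge x)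
        calc ENNReal.ofReal (φ t) + ENNReal.ofReal δ * μ (Ici (t + ε))
            = ∫⁻ x, (ENNReal.ofReal (φ t)
                + (Ici (t + ε)).indicator (fun _ => ENNReal.ofReal δ) x) ∂μ := by
              rw [lintegral_add_left measurable_const, lintegral_const, measure_univ,
                mul_one, lintegral_indicator measurableSet_Ici _, setLIntegral_const]
          _ ≤ I := lintegral_mono hpt
      have hIstrict : ENNReal.ofReal (φ t) < I := by
        refine lt_of_lt_of_le ?_ hIgt
        refine ENNReal.lt_add_right hφtnetop ?_
        exact mul_ne_zero (ENNReal.ofReal_pos.mpr hδpos).ne' hμε.ne'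
      have hRgt : 1 < I / ENNReal.ofReal (φ t) :=
        ENNReal.lt_div_iff_mul_lt (Or.inl hφtne) (Or.inl hφtnetop) |>.mpr
          (by simpa using hIstrict)
      have hRlt : I / ENNReal.ofReal (φ t) < ⊤ :=
        ENNReal.div_lt_top hItop hφtne
      set ε' : ENNReal := I / ENNReal.ofReal (φ t) - 1 with hε'def
      have hε'pos : 0 < ε' := tsub_pos_of_lt hRgt
      have hε'top : ε' ≠ ⊤ := by
        refine ne_top_of_le_ne_top hRlt.ne ?_
        exact tsub_le_self
      have hM1ne : M + 1 ≠ 0 := by simp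
      have hM1top : M + 1 ≠ ⊤ := by simp [hMlt.ne]
      set a : ℝ := (ε' / (M + 1)).toReal with hadef
      have hdivne : ε' / (M + 1) ≠ 0 := by
        simp only [ne_eq, ENNReal.div_eq_zero_iff, not_or]
        exact ⟨hε'pos.ne', hM1top⟩
      have hdivtop : ε' / (M + 1) ≠ ⊤ := by
        simp only [ne_eq, ENNReal.div_eq_top, not_or, not_and_or]
        exact ⟨Or.inr hM1ne, Or.inl hε'top⟩
      have hapos : 0 < a := ENNReal.toReal_pos hdivne hdivtop
      have haofReal : ENNReal.ofReal a = ε' / (M + 1) := ENNReal.ofReal_toReal hdivtop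
      refine ⟨a, hapos, ?_⟩
      calc (∫⁻ x, ENNReal.ofReal (max 0 (a * (x - t) + 1)) ∂μ)
          ≤ ENNReal.ofReal a * M + 1 := hLHS a hapos
        _ ≤ ε' + 1 := by
            refine add_le_add_left ?_ 1
            rw [haofReal]
            calc ε' / (M + 1) * M ≤ ε' / (M + 1) * (M + 1) :=
                  mul_le_mul_right (le_add_right le_rfl) _
              _ = ε' := ENNReal.div_mul_cancel hM1ne hM1top
        _ = I / ENNReal.ofReal (φ t) := by
            rw [hε'def]
            exact tsub_add_cancel_of_le hRgt.le
      done
end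

section
/- Let Y be a real-valued random variable with non-atomic distribution μ, E[max{0,Y}] < ∞, t > E[Y], and μ((t,∞)) > 0. Then there exists a ∈ (0,∞) with ∫_{t−a⁻¹}^∞ (x−t) dμ(x) = 0, and for any such a, the value E[max{0, a(Y−t)+1}] equals P{Y > t − a⁻¹}, and this value is the global minimum over all b ∈ (0,∞) of E[max{0, b(Y−t)+1}]. -/
open MeasureTheory Set Filter


lemma integ_sub_on_Ici (μ : Measure ℝ) [IsProbabilityMeasure μ]
    (hpos : Integrable (fun x : ℝ => max 0 x) μ) (t c : ℝ) :
    IntegrableOn (fun x : ℝ => x - t) (Set.Ici c) μ := by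
  have hg : Integrable (fun x : ℝ => max 0 x + (|t| + |t - c|)) (μ.restrict (Set.Ici c)) :=
    (hpos.restrict).add (integrable_const _)
  refine hg.mono' ((continuous_id.sub continuous_const).aestronglyMeasurable) ?_
  refine (ae_restrict_iff' measurableSet_Ici).2 (ae_of_all _ fun x hx => ?_)
  have hx' : c ≤ x := hx
  have h1 : x ≤ max 0 x := le_max_right _ _
  have h2 : (0:ℝ) ≤ max 0 x := le_max_left _ _
  have h3 : t - c ≤ |t - c| := le_abs_self _
  have h4 : -|t| ≤ t := neg_abs_le t
  have h5 : (0:ℝ) ≤ |t - c| := abs_nonneg _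
  have h6 : (0:ℝ) ≤ |t| := abs_nonneg _
  rw [Real.norm_eq_abs]
  rcases le_total t x with h | h
  · rw [abs_of_nonneg (by linarith)]; linarith
  · rw [abs_of_nonpos (by linarith)]; linarith

lemma integ_max (μ : Measure ℝ) [IsProbabilityMeasure μ]
    (hpos : Integrable (fun x : ℝ => max 0 x) μ) (t b : ℝ) (hb : 0 ≤ b) :
    Integrable (fun x : ℝ => max 0 (b * (x - t) + 1)) μ := by
  have hg : Integrable (fun x : ℝ => b * max 0 x + (b * |t| + 1)) μ :=
    (hpos.const_mul b).add (integrable_const _)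
  refine hg.mono' ((continuous_const.max ((continuous_const.mul
    (continuous_id.sub continuous_const)).add continuous_const)).aestronglyMeasurable)
    (ae_of_all _ fun x => ?_)
  rw [Real.norm_eq_abs, abs_of_nonneg (le_max_left _ _)]
  have h1 : x ≤ max 0 x := le_max_right _ _
  have h2 : (0:ℝ) ≤ max 0 x := le_max_left _ _
  have h4 : -|t| ≤ t := neg_abs_le t
  have h5 : b * x ≤ b * max 0 x := mul_le_mul_of_nonneg_left h1 hb
  have h6 : b * (-|t|) ≤ b * t := mul_le_mul_of_nonneg_left h4 hb
  have h7 : 0 ≤ b * max 0 x := mul_nonneg hb h2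
  have h8 : 0 ≤ b * |t| := mul_nonneg hb (abs_nonneg t)
  rcases max_cases 0 (b * (x - t) + 1) with ⟨he, _⟩ | ⟨he, _⟩ <;> rw [he] <;> nlinarith

lemma cont_g (μ : Measure ℝ) [IsProbabilityMeasure μ] [NullSingletonClass μ]
    (hpos : Integrable (fun x : ℝ => max 0 x) μ) (t : ℝ) :
    Continuous (fun c : ℝ => ∫ x in Set.Ici c, (x - t) ∂μ) := by
  rw [continuous_iff_continuousAt]
  intro c
  have hInt : IntegrableOn (fun x : ℝ => x - t) (Set.Ici (c - 1)) μ :=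
    integ_sub_on_Ici μ hpos t (c - 1)
  have key : Tendsto (fun c' : ℝ => ∫ x, Set.indicator (Set.Ici c') (fun x => x - t) x ∂μ)
      (nhds c) (nhds (∫ x, Set.indicator (Set.Ici c) (fun x => x - t) x ∂μ)) := by
    apply tendsto_integral_filter_of_dominated_convergence
      (Set.indicator (Set.Ici (c - 1)) (fun x => |x - t|))
    · filter_upwards with c'
      exact ((continuous_id.sub continuous_const).aestronglyMeasurable).indicator
        measurableSet_Ici
    · filter_upwards [eventually_gt_nhds (show c - 1 < c by linarith)] with c' hc'
      refine ae_of_all _ fun x => ?_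
      by_cases hx : x ∈ Set.Ici c'
      · rw [Set.indicator_of_mem hx, Set.indicator_of_mem (show x ∈ Set.Ici (c-1) from le_trans hc'.le hx),
          Real.norm_eq_abs]
      · rw [Set.indicator_of_notMem hx, norm_zero]
        exact Set.indicator_nonneg (fun y _ => abs_nonneg _) x
    · exact (integrable_indicator_iff measurableSet_Ici).2 hInt.abs
    · have hne : ∀ᵐ x ∂μ, x ≠ c := by
        have : μ {c} = 0 := measure_singleton c
        rw [ae_iff]
        simpa [Set.setOf_eq_eq_singleton] using this
      filter_upwards [hne] with x hx
      rcases lt_or_gt_of_ne hx with h | h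
      · -- x < c : eventually c' > x, indicator = 0
        have : ∀ᶠ c' in nhds c, Set.indicator (Set.Ici c') (fun x => x - t) x = 0 := by
          filter_upwards [eventually_gt_nhds h] with c' hc'
          exact Set.indicator_of_notMem (show x ∉ Set.Ici c' from not_le.2 hc') _
        rw [Set.indicator_of_notMem (show x ∉ Set.Ici c from not_le.2 h)]
        exact Tendsto.congr' (this.mono fun c' hc' => hc'.symm) tendsto_const_nhds
      · have : ∀ᶠ c' in nhds c, Set.indicator (Set.Ici c') (fun x => x - t) x = x - t := by
          filter_upwards [eventually_lt_nhds h] with c' hc'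
          exact Set.indicator_of_mem (show x ∈ Set.Ici c' from hc'.le) _
        rw [Set.indicator_of_mem (show x ∈ Set.Ici c from le_of_lt h)]
        exact Tendsto.congr' (this.mono fun c' hc' => hc'.symm) tendsto_const_nhds
  simpa only [ContinuousAt, integral_indicator measurableSet_Ici] using key





-- common computation
lemma comp_int (μ : Measure ℝ) [IsProbabilityMeasure μ]
    (hpos : Integrable (fun x : ℝ => max 0 x) μ) (t c r : ℝ) :
    ∫ x in Set.Ici c, (r * (x - t) + 1) ∂μ
      = r * (∫ x in Set.Ici c, (x - t) ∂μ) + (μ (Set.Ici c)).toReal := by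
  rw [integral_add ((integ_sub_on_Ici μ hpos t c).const_mul r) (integrable_const _),
    integral_const_mul r, setIntegral_const]
  simp [Measure.real]

lemma part2 (μ : Measure ℝ) [IsProbabilityMeasure μ] [NullSingletonClass μ]
    (hpos : Integrable (fun x : ℝ => max 0 x) μ) (t : ℝ)
    (a : ℝ) (ha : 0 < a) (hzero : (∫ x in Set.Ici (t - a⁻¹), (x - t) ∂μ) = 0) :
    ((∫ x, max 0 (a * (x - t) + 1) ∂μ) = (μ (Set.Ioi (t - a⁻¹))).toReal ∧
      ∀ b : ℝ, 0 < b →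
        (∫ x, max 0 (a * (x - t) + 1) ∂μ) ≤ ∫ x, max 0 (b * (x - t) + 1) ∂μ) := by
  set c : ℝ := t - a⁻¹ with hc
  have hca : a * (c - t) + 1 = 0 := by
    have : c - t = -a⁻¹ := by rw [hc]; ring
    rw [this, mul_neg, mul_inv_cancel₀ ha.ne']; ring
  have hval : (∫ x, max 0 (a * (x - t) + 1) ∂μ) = (μ (Set.Ici c)).toReal := by
    have hpt : ∀ x, max 0 (a * (x - t) + 1)
        = (Set.Ici c).indicator (fun x => a * (x - t) + 1) x := by
      intro x
      by_cases hx : c ≤ x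
      · rw [Set.indicator_of_mem (show x ∈ Set.Ici c from hx)]
        refine max_eq_right ?_
        nlinarith [mul_le_mul_of_nonneg_left (sub_le_sub_right hx t) ha.le]
      · rw [Set.indicator_of_notMem (show x ∉ Set.Ici c from hx)]
        push_neg at hx
        refine max_eq_left ?_
        nlinarith [mul_le_mul_of_nonneg_left (sub_le_sub_right hx.le t) ha.le]
    rw [integral_congr_ae (ae_of_all _ hpt), integral_indicator measurableSet_Ici,
      comp_int μ hpos t c a, hzero, mul_zero, zero_add]
  have hIciIoi : μ (Set.Ioi c) = μ (Set.Ici c) := measure_congr Ioi_ae_eq_Ici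
  constructor
  · rw [hval, hIciIoi]
  · intro b hb
    rw [hval]
    have hind : ∀ x, (Set.Ici c).indicator (fun x => b * (x - t) + 1) x
        ≤ max 0 (b * (x - t) + 1) := by
      intro x
      by_cases hx : c ≤ x
      · rw [Set.indicator_of_mem (show x ∈ Set.Ici c from hx)]; exact le_max_right _ _
      · rw [Set.indicator_of_notMem (show x ∉ Set.Ici c from hx)]; exact le_max_left _ _
    have hmono : ∫ x, (Set.Ici c).indicator (fun x => b * (x - t) + 1) x ∂μ
        ≤ ∫ x, max 0 (b * (x - t) + 1) ∂μ := by
      refine integral_mono ?_ (integ_max μ hpos t b hb.le) hind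
      exact (integrable_indicator_iff measurableSet_Ici).2
        (((integ_sub_on_Ici μ hpos t c).const_mul b).add (integrable_const _))
    calc (μ (Set.Ici c)).toReal
        = ∫ x, (Set.Ici c).indicator (fun x => b * (x - t) + 1) x ∂μ := by
          rw [integral_indicator measurableSet_Ici, comp_int μ hpos t c b, hzero,
            mul_zero, zero_add]
      _ ≤ _ := hmono



lemma K_pos (μ : Measure ℝ) [IsProbabilityMeasure μ]
    (hpos : Integrable (fun x : ℝ => max 0 x) μ) (t : ℝ)
    (htail : 0 < μ (Set.Ioi t)) :
    0 < ∫ x in Set.Ici t, (x - t) ∂μ := by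
  obtain ⟨s, hts, hs⟩ : ∃ s, t < s ∧ 0 < μ (Set.Ioi s) := by
    by_contra h
    push_neg at h
    have hsub : Set.Ioi t ⊆ ⋃ n : ℕ, Set.Ioi (t + 1 / (n + 1)) := by
      intro x hx
      obtain ⟨n, hn⟩ := exists_nat_one_div_lt (sub_pos.2 (show t < x from hx))
      exact Set.mem_iUnion.2 ⟨n, by simp only [Set.mem_Ioi]; linarith⟩
    have : μ (Set.Ioi t) = 0 := by
      refine measure_mono_null hsub (measure_iUnion_null fun n => ?_)
      have h1 : (0:ℝ) < 1 / (n + 1) := by positivity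
      exact le_antisymm (h _ (by linarith)) zero_le
    exact absurd this htail.ne'
  have hIci : 0 < (μ (Set.Ici s)).toReal := by
    refine ENNReal.toReal_pos ?_ (measure_ne_top _ _)
    exact (lt_of_lt_of_le hs (measure_mono Set.Ioi_subset_Ici_self)).ne'
  have h1 : (μ (Set.Ici s)).toReal * (s - t) ≤ ∫ x in Set.Ici s, (x - t) ∂μ := by
    have := setIntegral_mono_on (integrable_const (s - t))
      ((integ_sub_on_Ici μ hpos t s)) measurableSet_Ici
      (fun x hx => by simp only [Set.mem_Ici] at hx; linarith)
    rwa [setIntegral_const, smul_eq_mul] at this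
  have h2 : ∫ x in Set.Ici s, (x - t) ∂μ ≤ ∫ x in Set.Ici t, (x - t) ∂μ := by
    refine setIntegral_mono_set (integ_sub_on_Ici μ hpos t t) ?_ ?_
    · refine (ae_restrict_iff' measurableSet_Ici).2 (ae_of_all _ fun x hx => ?_)
      simp only [Set.mem_Ici] at hx
      simp only [Pi.zero_apply]
      linarith
    · exact HasSubset.Subset.eventuallyLE (Set.Ici_subset_Ici.2 hts.le)
  have : 0 < (μ (Set.Ici s)).toReal * (s - t) := mul_pos hIci (by linarith)
  linarith



lemma exists_neg (μ : Measure ℝ) [IsProbabilityMeasure μ]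
    (hpos : Integrable (fun x : ℝ => max 0 x) μ) (t : ℝ)
    (ht : (¬ Integrable (fun x : ℝ => x) μ) ∨ (∫ x, x ∂μ) < t)
    (hK0 : 0 ≤ ∫ x in Set.Ici t, (x - t) ∂μ) :
    ∃ c₀ : ℝ, c₀ < t ∧ (∫ x in Set.Ici c₀, (x - t) ∂μ) < 0 := by
  set K : ℝ := ∫ x in Set.Ici t, (x - t) ∂μ with hK
  set ν : Measure ℝ := μ.withDensity (fun x => ENNReal.ofReal (t - x)) with hν
  have hmeas : Measurable (fun x : ℝ => ENNReal.ofReal (t - x)) :=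
    (measurable_const.sub measurable_id).ennreal_ofReal
  have hνapp : ∀ s : Set ℝ, MeasurableSet s →
      ν s = ∫⁻ x in s, ENNReal.ofReal (t - x) ∂μ := fun s hs => withDensity_apply _ hs
  -- Step 1: ofReal K < ν (Iio t)
  have hKA : ENNReal.ofReal K < ν (Set.Iio t) := by
    by_cases hInt : Integrable (fun x : ℝ => x) μ
    · -- integrable case
      have hmean : ∫ x, x ∂μ < t := by
        rcases ht with h | h
        · exact absurd hInt h
        · exact h
      have hItot : Integrable (fun x : ℝ => x - t) μ := hInt.sub (integrable_const t)
      have hIio : IntegrableOn (fun x : ℝ => t - x) (Set.Iio t) μ :=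
        ((integrable_const t).sub hInt).restrict
      have hsplit : (∫ x in Set.Iio t, (x - t) ∂μ) + K = ∫ x, (x - t) ∂μ := by
        have := integral_add_compl (measurableSet_Iio : MeasurableSet (Set.Iio t)) hItot
        rwa [Set.compl_Iio] at this
      have htot : ∫ x, (x - t) ∂μ = (∫ x, x ∂μ) - t := by
        rw [integral_sub hInt (integrable_const t), integral_const]
        simp
      have hnegflip : ∫ x in Set.Iio t, (t - x) ∂μ = -∫ x in Set.Iio t, (x - t) ∂μ := by
        rw [← integral_neg]
        congr 1
        ext x
        ring
      have hKlt : K < ∫ x in Set.Iio t, (t - x) ∂μ := by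
        rw [hnegflip]; linarith
      have hA : ν (Set.Iio t) = ENNReal.ofReal (∫ x in Set.Iio t, (t - x) ∂μ) := by
        rw [hνapp _ measurableSet_Iio,
          ← ofReal_integral_eq_lintegral_ofReal hIio
            ((ae_restrict_iff' measurableSet_Iio).2 (ae_of_all _ fun x hx => by
              simp only [Set.mem_Iio] at hx
              simp only [Pi.zero_apply]
              linarith))]
      rw [hA]
      exact (ENNReal.ofReal_lt_ofReal_iff (lt_of_le_of_lt hK0 hKlt)).2 hKlt
    · -- non-integrable case : ν (Iio t) = ∞
      have hAtop : ν (Set.Iio t) = ⊤ := by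
        by_contra hfin
        have hfin' : ν (Set.Iio t) < ⊤ := lt_top_iff_ne_top.2 hfin
        -- integrability of t - x on Iio t
        have hnn : ∫⁻ x in Set.Iio t, ↑‖t - x‖₊ ∂μ = ν (Set.Iio t) := by
          rw [hνapp _ measurableSet_Iio]
          refine setLIntegral_congr_fun measurableSet_Iio (fun x hx => ?_)
          simp only [Set.mem_Iio] at hx
          rw [← enorm_eq_nnnorm, ← ofReal_norm, Real.norm_eq_abs, abs_of_nonneg (by linarith)]
        have hIio : IntegrableOn (fun x : ℝ => t - x) (Set.Iio t) μ := by
          refine ⟨(continuous_const.sub continuous_id).aestronglyMeasurable, ?_⟩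
          rw [HasFiniteIntegral]
          exact lt_of_eq_of_lt hnn hfin'
        have hIioX : IntegrableOn (fun x : ℝ => x) (Set.Iio t) μ := by
          exact ((integrable_const (μ := μ.restrict (Set.Iio t)) t).sub hIio).congr
            (ae_of_all _ fun x => by simp)
        have hIciX : IntegrableOn (fun x : ℝ => x) (Set.Ici t) μ := by
          exact ((integ_sub_on_Ici μ hpos t t).add
            (integrable_const (μ := μ.restrict (Set.Ici t)) t)).congr
            (ae_of_all _ fun x => by simp)
        have : Integrable (fun x : ℝ => x) μ := by
          have h := hIioX.union hIciX
          rwa [Set.Iio_union_Ici, integrableOn_univ] at h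
        exact hInt this
      rw [hAtop]
      exact ENNReal.ofReal_lt_top
  -- Step 2: monotone family of sets
  set S : ℕ → Set ℝ := fun n => Set.Ico (t - (n + 1)) t with hS
  have hSmono : Monotone S := by
    intro n m hnm
    refine Set.Ico_subset_Ico_left ?_
    have : (n : ℝ) ≤ m := Nat.cast_le.2 hnm
    linarith
  have hSunion : (⋃ n, S n) = Set.Iio t := by
    ext x
    simp only [Set.mem_iUnion, hS, Set.mem_Ico, Set.mem_Iio]
    constructor
    · rintro ⟨n, _, h2⟩; exact h2
    · intro hx
      obtain ⟨n, hn⟩ := exists_nat_ge (t - x)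
      exact ⟨n, by linarith, hx⟩
  have htend : Tendsto (fun n => ν (S n)) atTop (nhds (ν (Set.Iio t))) := by
    have := tendsto_measure_iUnion_atTop (μ := ν) hSmono
    rwa [hSunion] at this
  have hev : ∀ᶠ n in atTop, ENNReal.ofReal K < ν (S n) :=
    htend.eventually (eventually_gt_nhds hKA)
  obtain ⟨n, hn⟩ := hev.exists
  set c₀ : ℝ := t - (n + 1) with hc₀
  have hc₀t : c₀ < t := by rw [hc₀]; have : (0:ℝ) ≤ n := Nat.cast_nonneg n; linarith
  refine ⟨c₀, hc₀t, ?_⟩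
  -- the real integral over Ico c₀ t
  have hIco : IntegrableOn (fun x : ℝ => t - x) (Set.Ico c₀ t) μ := by
    exact (((integ_sub_on_Ici μ hpos t c₀).mono_set
      (Set.Ico_subset_Ici_self : Set.Ico c₀ t ⊆ Set.Ici c₀)).neg).congr
      (ae_of_all _ fun x => by simp [neg_sub])
  have hφ : ENNReal.ofReal (∫ x in Set.Ico c₀ t, (t - x) ∂μ) = ν (S n) := by
    rw [hνapp _ measurableSet_Ico]
    exact ofReal_integral_eq_lintegral_ofReal hIco
      ((ae_restrict_iff' measurableSet_Ico).2 (ae_of_all _ fun x hx => by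
        simp only [Set.mem_Ico] at hx
        simp only [Pi.zero_apply]
        linarith [hx.2]))
  have hKφ : K < ∫ x in Set.Ico c₀ t, (t - x) ∂μ := by
    have := hn
    rw [← hφ] at this
    exact (ENNReal.ofReal_lt_ofReal_iff_of_nonneg hK0).1 this
  have hsplit : ∫ x in Set.Ici c₀, (x - t) ∂μ
      = (∫ x in Set.Ico c₀ t, (x - t) ∂μ) + K := by
    rw [hK, ← setIntegral_union (show Disjoint (Set.Ico c₀ t) (Set.Ici t) from Set.disjoint_left.2 fun x hx hx' => absurd hx.2 (not_lt.2 hx')) measurableSet_Ici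
      ((integ_sub_on_Ici μ hpos t c₀).mono_set (Set.Ico_subset_Ici_self : Set.Ico c₀ t ⊆ Set.Ici c₀))
      (integ_sub_on_Ici μ hpos t t), Set.Ico_union_Ici_eq_Ici hc₀t.le]
  have hflip : ∫ x in Set.Ico c₀ t, (x - t) ∂μ = -∫ x in Set.Ico c₀ t, (t - x) ∂μ := by
    rw [← integral_neg]
    congr 1
    ext x
    ring
  rw [hsplit, hflip]
  linarith

/-- Proposition 1, part II: if `μ` is a non-atomic distribution of `Y` with
`E max{0,Y} < ∞`, `t > E Y` and `μ((t,∞)) > 0`, then there is `a ∈ (0,∞)` with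
`∫_{[t-a⁻¹,∞)} (x-t) dμ = 0`; for any such `a`, `E max{0, a(Y-t)+1} = P{Y > t-a⁻¹}`
and this is the global minimum of `b ↦ E max{0, b(Y-t)+1}` over `(0,∞)`. -/
theorem stmt1 (μ : Measure ℝ) [IsProbabilityMeasure μ] [NullSingletonClass μ]
    (hpos : Integrable (fun x : ℝ => max 0 x) μ)
    (t : ℝ)
    (ht : (¬ Integrable (fun x : ℝ => x) μ) ∨ (∫ x, x ∂μ) < t)
    (htail : 0 < μ (Set.Ioi t)) :
    (∃ a : ℝ, 0 < a ∧ (∫ x in Set.Ici (t - a⁻¹), (x - t) ∂μ) = 0) ∧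
    ∀ a : ℝ, 0 < a → (∫ x in Set.Ici (t - a⁻¹), (x - t) ∂μ) = 0 →
      ((∫ x, max 0 (a * (x - t) + 1) ∂μ) = (μ (Set.Ioi (t - a⁻¹))).toReal ∧
        ∀ b : ℝ, 0 < b →
          (∫ x, max 0 (a * (x - t) + 1) ∂μ) ≤ ∫ x, max 0 (b * (x - t) + 1) ∂μ) := by
  have hKpos := K_pos μ hpos t htail
  obtain ⟨c₀, hc₀t, hc₀neg⟩ := exists_neg μ hpos t ht hKpos.le
  have hcont : ContinuousOn (fun c : ℝ => ∫ x in Set.Ici c, (x - t) ∂μ)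
      (Set.Icc c₀ t) := (cont_g μ hpos t).continuousOn
  have hIVT := intermediate_value_Icc hc₀t.le hcont
  have h0mem : (0:ℝ) ∈ Set.Icc (∫ x in Set.Ici c₀, (x - t) ∂μ)
      (∫ x in Set.Ici t, (x - t) ∂μ) := ⟨hc₀neg.le, hKpos.le⟩
  obtain ⟨c, hcmem, hc0⟩ := hIVT h0mem
  have hct : c < t := by
    rcases lt_or_eq_of_le hcmem.2 with h | h
    · exact h
    · exfalso; rw [h] at hc0; exact hKpos.ne' hc0
  refine ⟨⟨(t - c)⁻¹, inv_pos.2 (sub_pos.2 hct), ?_⟩,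
    fun a ha hzero => part2 μ hpos t a ha hzero⟩
  rw [show t - ((t - c)⁻¹)⁻¹ = c from by rw [inv_inv]; ring]
  exact hc0
end

section
/- Let X and Y be real-valued random variables with E[max{0,Y}] < ∞ such that E[φ(X)] ≤ E[φ(Y)] for every function φ of the form φ(x) = max{0, a(x−t)+1} with a > 0, t ∈ ℝ. If s ∈ ℝ satisfies P{Y > s} > 0, then P{X ≥ E(Y | Y > s)} ≤ P{Y > s}, where E(Y | Y > s) = E[Y·1_{(s,∞)}(Y)] / P{Y > s}. -/
open MeasureTheory Set

/-- Proposition 2, part II: if `E φ(X) ≤ E φ(Y)` for all `φ(x) = max{0, a(x-t)+1}` with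
`a > 0`, and `P{Y > s} > 0`, then `P{X ≥ E(Y | Y > s)} ≤ P{Y > s}`, where
`E(Y | Y > s) = E[Y 1_{Y>s}] / P{Y > s}`. -/
theorem stmt3 {Ω : Type*} [MeasurableSpace Ω] (P : Measure Ω) [IsProbabilityMeasure P]
    (X Y : Ω → ℝ) (hX : Measurable X) (hY : Measurable Y)
    (hint : Integrable (fun ω => max 0 (Y ω)) P)
    (hmaj : ∀ a t : ℝ, 0 < a →
      (∫⁻ ω, ENNReal.ofReal (max 0 (a * (X ω - t) + 1)) ∂P)
        ≤ ∫⁻ ω, ENNReal.ofReal (max 0 (a * (Y ω - t) + 1)) ∂P)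
    (s : ℝ) (hs : 0 < P {ω | s < Y ω}) :
    P {ω | (∫ ω in {ω | s < Y ω}, Y ω ∂P) / (P {ω | s < Y ω}).toReal ≤ X ω}
      ≤ P {ω | s < Y ω} := by
  set A : Set Ω := {ω | s < Y ω} with hAdef
  have hAm : MeasurableSet A := measurableSet_lt measurable_const hY
  set q : ENNReal := P A with hqdef
  have hqne : q ≠ 0 := hs.ne'
  have hqfin : q ≠ ⊤ := (measure_lt_top P A).ne
  set Q : ℝ := q.toReal with hQdef
  have hQpos : 0 < Q := ENNReal.toReal_pos hqne hqfin
  set g : Ω → ℝ := fun ω => max 0 (Y ω - s) with hgdef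
  have hgmeas : Measurable g := measurable_const.max (hY.sub measurable_const)
  have hgint : Integrable g P := by
    refine (hint.add (integrable_const |s|)).mono' hgmeas.aestronglyMeasurable ?_
    filter_upwards with ω
    simp only [Real.norm_eq_abs, Pi.add_apply]
    rw [abs_of_nonneg (le_max_left 0 (Y ω - s))]
    exact max_le (by positivity) (by nlinarith [le_max_right 0 (Y ω), neg_abs_le s])
  have hYint : IntegrableOn Y A P := by
    refine ((hint.add (integrable_const |s|)).restrict (s := A)).mono'
      hY.aestronglyMeasurable.restrict ?_
    refine (ae_restrict_iff' hAm).2 (ae_of_all _ fun ω hω => ?_)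
    have hω' : s < Y ω := hω
    simp only [Real.norm_eq_abs, Pi.add_apply]
    refine abs_le.2 ⟨?_, ?_⟩ <;>
      nlinarith [le_max_right 0 (Y ω), le_max_left 0 (Y ω), neg_abs_le s, le_abs_self s]
  have hgeq : ∀ ω, g ω = A.indicator (fun ω => Y ω - s) ω := by
    intro ω
    by_cases h : ω ∈ A
    · rw [indicator_of_mem h]
      exact max_eq_right (by simp only [hAdef, mem_setOf_eq] at h; linarith)
    · rw [indicator_of_notMem h]
      exact max_eq_left (by simp only [hAdef, mem_setOf_eq, not_lt] at h; linarith)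
  have hintg : ∫ ω, g ω ∂P = ∫ ω in A, (Y ω - s) ∂P := by
    simp_rw [hgeq]; exact integral_indicator hAm
  have h2 : ∫ ω in A, (Y ω - s) ∂P = (∫ ω in A, Y ω ∂P) - s * Q := by
    rw [integral_sub hYint (integrableOn_const (measure_lt_top P A).ne),
      setIntegral_const, smul_eq_mul, measureReal_def, ← hqdef, ← hQdef]
    ring
  have hIpos : 0 < ∫ ω, g ω ∂P := by
    have hg0 : 0 ≤ g := fun ω => le_max_left _ _
    rw [integral_pos_iff_support_of_nonneg hg0 hgint]
    have hsupp : Function.support g = A := by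
      ext ω
      simp [Function.mem_support, hgdef, hAdef, max_eq_left_iff, sub_nonpos, not_le]
    rw [hsupp]; exact hs
  set m : ℝ := (∫ ω in A, Y ω ∂P) / Q with hmdef
  have hmQ : m * Q = ∫ ω in A, Y ω ∂P := by
    rw [hmdef]; field_simp
  have hI' : ∫ ω, g ω ∂P = (m - s) * Q := by
    rw [hintg, h2, ← hmQ]; ring
  have hms : 0 < m - s := by
    rw [hI'] at hIpos
    nlinarith
  set a : ℝ := (m - s)⁻¹ with hadef
  have ha : 0 < a := inv_pos.2 hms
  have key : ∀ x : ℝ, max 0 (a * (x - m) + 1) = a * max 0 (x - s) := by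
    intro x
    have h1 : a * (x - m) + 1 = a * (x - s) := by
      rw [hadef]; field_simp; ring
    rw [h1, mul_max_of_nonneg _ _ ha.le, mul_zero]
  have hcmp : (∫⁻ ω, ENNReal.ofReal (max 0 (X ω - s)) ∂P)
      ≤ ∫⁻ ω, ENNReal.ofReal (max 0 (Y ω - s)) ∂P := by
    have h := hmaj a m ha
    simp only [key, ENNReal.ofReal_mul ha.le] at h
    rw [lintegral_const_mul' _ _ ENNReal.ofReal_ne_top,
      lintegral_const_mul' _ _ ENNReal.ofReal_ne_top] at h
    exact (ENNReal.mul_le_mul_iff_right (ENNReal.ofReal_pos.mpr ha).ne' ENNReal.ofReal_ne_top).mp h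
  have hRHS : (∫⁻ ω, ENNReal.ofReal (max 0 (Y ω - s)) ∂P) = ENNReal.ofReal (m - s) * q := by
    rw [← ofReal_integral_eq_lintegral_ofReal hgint (ae_of_all _ fun ω => le_max_left _ _),
      hI', ENNReal.ofReal_mul hms.le, hQdef, ENNReal.ofReal_toReal hqfin]
  have hsets : {ω | ENNReal.ofReal (m - s) ≤ ENNReal.ofReal (max 0 (X ω - s))}
      = {ω | m ≤ X ω} := by
    ext ω
    simp only [mem_setOf_eq, ENNReal.ofReal_le_ofReal_iff (le_max_left 0 (X ω - s))]
    constructor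
    · intro h
      rcases le_or_gt (X ω - s) 0 with h' | h'
      · rw [max_eq_left h'] at h; linarith
      · rw [max_eq_right h'.le] at h; linarith
    · intro h; exact le_trans (by linarith) (le_max_right _ _)
  have hfm : AEMeasurable (fun ω => ENNReal.ofReal (max 0 (X ω - s))) P :=
    ((measurable_const.max (hX.sub measurable_const)).ennreal_ofReal).aemeasurable
  have markov := mul_meas_ge_le_lintegral₀ hfm (ENNReal.ofReal (m - s))
  rw [hsets] at markov
  have hfinal : ENNReal.ofReal (m - s) * P {ω | m ≤ X ω} ≤ ENNReal.ofReal (m - s) * q :=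
    markov.trans (hcmp.trans hRHS.le)
  exact (ENNReal.mul_le_mul_iff_right (ENNReal.ofReal_pos.mpr hms).ne' ENNReal.ofReal_ne_top).mp hfinal
end

section
/- Let Y be a real-valued random variable with E|Y| < ∞ and let s ∈ ℝ satisfy P{Y ≥ s} > 0. Define X = Y·1_{Y < s} + E(Y | Y ≥ s)·1_{Y ≥ s}. Then E[φ(X)] ≤ E[φ(Y)] for every convex φ : ℝ → ℝ, and P{X ≥ E(Y | Y ≥ s)} = P{Y ≥ s}. -/
open MeasureTheory Set

/-- Proposition 3 (sharpness): with `m = E(Y | Y ≥ s)` and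
`X = Y 1_{Y < s} + m 1_{Y ≥ s}`, one has `E φ(X) ≤ E φ(Y)` for every convex `φ`
(with `φ(Y)` integrable, in which case `φ(X)` is integrable too), and
`P{X ≥ m} = P{Y ≥ s}`. -/
theorem stmt4 {Ω : Type*} [MeasurableSpace Ω] (P : Measure Ω) [IsProbabilityMeasure P]
    (Y : Ω → ℝ) (hY : Measurable Y) (hint : Integrable Y P)
    (s : ℝ) (hs : 0 < P {ω | s ≤ Y ω})
    (m : ℝ) (hm : m = (∫ ω in {ω | s ≤ Y ω}, Y ω ∂P) / (P {ω | s ≤ Y ω}).toReal)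
    (X : Ω → ℝ) (hXdef : X = fun ω => if Y ω < s then Y ω else m) :
    (∀ φ : ℝ → ℝ, ConvexOn ℝ Set.univ φ → Integrable (fun ω => φ (Y ω)) P →
        Integrable (fun ω => φ (X ω)) P ∧
          (∫ ω, φ (X ω) ∂P) ≤ ∫ ω, φ (Y ω) ∂P) ∧
    P {ω | m ≤ X ω} = P {ω | s ≤ Y ω} := by
  set A : Set Ω := {ω | s ≤ Y ω} with hA
  have hAm : MeasurableSet A := measurableSet_le measurable_const hY
  have hPAt : 0 < (P A).toReal := ENNReal.toReal_pos hs.ne' (measure_ne_top P A)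
  -- s ≤ m
  have hsm : s ≤ m := by
    rw [hm, le_div_iff₀ hPAt]
    calc s * (P A).toReal = ∫ _ in A, s ∂P := by
          rw [setIntegral_const, smul_eq_mul, mul_comm, Measure.real]
      _ ≤ ∫ ω in A, Y ω ∂P := by
          refine setIntegral_mono_on (integrableOn_const ?_)
            hint.integrableOn hAm (fun ω hω => hω)
          exact (measure_lt_top P A).ne
  constructor
  · intro φ hφ hφY
    have hc : ContinuousOn φ univ := hφ.continuousOn isOpen_univ
    -- Jensen on the normalized restriction
    haveI : NeZero (P.restrict A) := by
      refine ⟨fun h => ?_⟩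
      have := Measure.restrict_apply_univ (μ := P) (s := A)
      rw [h] at this
      simp at this
      exact hs.ne' this.symm
    have hμuniv : (P.restrict A) univ = P A := Measure.restrict_apply_univ _
    have hjen : φ (⨍ ω, Y ω ∂(P.restrict A)) ≤ ⨍ ω, φ (Y ω) ∂(P.restrict A) :=
      hφ.map_average_le hc isClosed_univ (ae_of_all _ fun _ => mem_univ _)
        hint.integrableOn hφY.integrableOn
    have havg : ⨍ ω, Y ω ∂(P.restrict A) = m := by
      rw [average_eq, Measure.real, hμuniv, hm, smul_eq_mul, div_eq_inv_mul]
    have hjen' : φ m * (P A).toReal ≤ ∫ ω in A, φ (Y ω) ∂P := by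
      rw [havg] at hjen
      rw [average_eq, Measure.real, hμuniv, smul_eq_mul] at hjen
      calc φ m * (P A).toReal ≤ ((P A).toReal⁻¹ * ∫ ω in A, φ (Y ω) ∂P) * (P A).toReal := by
            exact mul_le_mul_of_nonneg_right hjen hPAt.le
        _ = ∫ ω in A, φ (Y ω) ∂P := by field_simp
    -- rewrite φ ∘ X as a piecewise function
    have hXeq : (fun ω => φ (X ω)) = fun ω => if Y ω < s then φ (Y ω) else φ m := by
      funext ω; rw [hXdef]; by_cases h : Y ω < s <;> simp [h]
    have hXA : ∀ ω ∈ A, φ (X ω) = φ m := by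
      intro ω hω
      have h' : s ≤ Y ω := hω
      rw [hXdef]; simp [if_neg (not_lt.2 h')]
    have hXAc : ∀ ω ∈ Aᶜ, φ (X ω) = φ (Y ω) := by
      intro ω hω; rw [hXdef]
      have : Y ω < s := not_le.1 hω
      simp [this]
    have hXint : Integrable (fun ω => φ (X ω)) P := by
      have i1 : IntegrableOn (fun ω => φ (X ω)) A P :=
        (integrableOn_congr_fun hXA hAm).2 (integrableOn_const (measure_lt_top P A).ne)
      have i2 : IntegrableOn (fun ω => φ (X ω)) Aᶜ P :=
        (integrableOn_congr_fun hXAc hAm.compl).2 hφY.integrableOn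
      have h := integrableOn_union.2 ⟨i1, i2⟩
      rwa [union_compl_self, integrableOn_univ] at h
    refine ⟨hXint, ?_⟩
    rw [← integral_add_compl hAm hXint, ← integral_add_compl hAm hφY]
    have h1 : ∫ ω in A, φ (X ω) ∂P = φ m * (P A).toReal := by
      rw [setIntegral_congr_fun hAm hXA, setIntegral_const, smul_eq_mul, mul_comm, Measure.real]
    have h2 : ∫ ω in Aᶜ, φ (X ω) ∂P = ∫ ω in Aᶜ, φ (Y ω) ∂P :=
      setIntegral_congr_fun hAm.compl hXAc
    rw [h1, h2]
    exact add_le_add hjen' le_rfl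
  · congr 1
    ext ω
    simp only [mem_setOf_eq, hXdef]
    by_cases h : Y ω < s
    · simp only [if_pos h]
      constructor
      · intro hmY; exact absurd (lt_of_lt_of_le h hsm) (not_lt.2 hmY)
      · intro hsY; exact absurd h (not_lt.2 hsY)
    · simp only [if_neg h]
      exact ⟨fun _ => not_lt.1 h, fun _ => le_rfl⟩
end

section
/- Let X and Y be real-valued random variables with E[max{0,Y}] < ∞ such that E[φ(X)] ≤ E[φ(Y)] for all φ(x) = max{0, a(x−t)+1}, a > 0, t ∈ ℝ. Then for all x ∈ (0,1), the quantile function of X satisfies H_X(x) ≤ (1/(1−x)) ∫_x^1 H_Y(u) du. -/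
open MeasureTheory Set
open scoped ENNReal

/-- The quantile function `H_Z(x) = inf {t : P{Z ≤ t} ≥ x}`. -/
noncomputable def quantile {Ω : Type*} [MeasurableSpace Ω]
    (μ : MeasureTheory.Measure Ω) (Z : Ω → ℝ) (x : ℝ) : ℝ :=
  sInf {t : ℝ | x ≤ (μ {ω | Z ω ≤ t}).toReal}

namespace StmtAux

open ProbabilityTheory Filter Topology

lemma ofReal_max0 (r : ℝ) : ENNReal.ofReal (max 0 r) = ENNReal.ofReal r := by
  rcases le_total 0 r with h | h
  · rw [max_eq_right h]
  · rw [max_eq_left h, ENNReal.ofReal_zero, Eq.comm, ENNReal.ofReal_eq_zero]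
    exact h

variable (μ : Measure ℝ)

/-- generalized inverse of the cdf -/
noncomputable def qf (x : ℝ) : ℝ := sInf {t : ℝ | x ≤ cdf μ t}

variable [IsProbabilityMeasure μ] {x : ℝ}

lemma quantile_eq_qf {Ω : Type*} [MeasurableSpace Ω] (P : Measure Ω)
    (Z : Ω → ℝ) (hZ : Measurable Z) (x : ℝ) [IsProbabilityMeasure (P.map Z)] :
    quantile P Z x = qf (P.map Z) x := by
  unfold quantile qf
  congr 1
  ext t
  rw [mem_setOf_eq, mem_setOf_eq, cdf_eq_real, measureReal_def, Measure.map_apply hZ measurableSet_Iic]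
  rfl

variable {μ}

omit [IsProbabilityMeasure μ] in
lemma qf_nonempty (hx1 : x < 1) : {t : ℝ | x ≤ cdf μ t}.Nonempty := by
  have h : ∀ᶠ t in atTop, x ≤ cdf μ t :=
    (tendsto_cdf_atTop μ).eventually (eventually_ge_nhds hx1)
  exact h.exists

omit [IsProbabilityMeasure μ] in
lemma qf_bddBelow (hx0 : 0 < x) : BddBelow {t : ℝ | x ≤ cdf μ t} := by
  have h : ∀ᶠ t in atBot, cdf μ t < x :=
    (tendsto_cdf_atBot μ).eventually (eventually_lt_nhds hx0)
  obtain ⟨t₀, ht₀⟩ := eventually_atBot.1 h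
  refine ⟨t₀, fun s hs => ?_⟩
  by_contra hc
  exact absurd hs (not_le.2 (ht₀ s (le_of_not_ge hc)))

omit [IsProbabilityMeasure μ] in
lemma le_cdf_of_qf_lt (hx1 : x < 1) {t : ℝ} (ht : qf μ x < t) : x ≤ cdf μ t := by
  obtain ⟨s, hs, hst⟩ := exists_lt_of_csInf_lt (qf_nonempty hx1) ht
  exact hs.trans (monotone_cdf μ hst.le)

omit [IsProbabilityMeasure μ] in
lemma le_cdf_qf (hx1 : x < 1) : x ≤ cdf μ (qf μ x) := by
  have h : Tendsto (cdf μ) (𝓝[>] (qf μ x)) (𝓝 (cdf μ (qf μ x))) :=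
    ((cdf μ).right_continuous (qf μ x)).mono_left (nhdsWithin_mono _ Ioi_subset_Ici_self)
  refine ge_of_tendsto h ?_
  exact eventually_mem_nhdsWithin.mono fun t ht => le_cdf_of_qf_lt hx1 ht

omit [IsProbabilityMeasure μ] in
lemma qf_le_iff (hx0 : 0 < x) (hx1 : x < 1) {t : ℝ} :
    qf μ x ≤ t ↔ x ≤ cdf μ t := by
  constructor
  · intro h
    exact (le_cdf_qf hx1).trans (monotone_cdf μ h)
  · intro h
    exact csInf_le (qf_bddBelow hx0) h

omit [IsProbabilityMeasure μ] in
lemma qf_monotoneOn : MonotoneOn (qf μ) (Ioo (0:ℝ) 1) := by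
  intro a ha b hb hab
  exact csInf_le_csInf (qf_bddBelow ha.1) (qf_nonempty hb.2)
    (fun t ht => hab.trans ht)

omit [IsProbabilityMeasure μ] in
lemma qf_aemeasurable : AEMeasurable (qf μ) (volume.restrict (Ioo (0:ℝ) 1)) :=
  aemeasurable_restrict_of_monotoneOn measurableSet_Ioo qf_monotoneOn

lemma qf_map : (volume.restrict (Ioo (0:ℝ) 1)).map (qf μ) = μ := by
  have hprob : IsProbabilityMeasure (volume.restrict (Ioo (0:ℝ) 1)) := by
    constructor
    rw [Measure.restrict_apply_univ, Real.volume_Ioo]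
    norm_num
  have hprob2 : IsProbabilityMeasure ((volume.restrict (Ioo (0:ℝ) 1)).map (qf μ)) :=
    Measure.isProbabilityMeasure_map qf_aemeasurable
  refine Measure.ext_of_Iic _ _ (fun t => ?_)
  rw [Measure.map_apply_of_aemeasurable qf_aemeasurable measurableSet_Iic,
    Measure.restrict_apply' measurableSet_Ioo]
  have hset : qf μ ⁻¹' (Iic t) ∩ Ioo (0:ℝ) 1 = Iic (cdf μ t) ∩ Ioo (0:ℝ) 1 := by
    ext u
    simp only [mem_inter_iff, mem_preimage, mem_Iic, mem_Ioo, and_congr_left_iff]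
    intro hu
    exact qf_le_iff hu.1 hu.2
  rw [hset, ← ofReal_cdf μ t]
  have h0 : 0 ≤ cdf μ t := cdf_nonneg μ t
  have h1 : cdf μ t ≤ 1 := cdf_le_one μ t
  apply le_antisymm
  · calc volume (Iic (cdf μ t) ∩ Ioo 0 1) ≤ volume (Ioc 0 (cdf μ t)) := by
          apply measure_mono
          rintro u ⟨h2, h3, _⟩
          exact ⟨h3, h2⟩
        _ = ENNReal.ofReal (cdf μ t) := by rw [Real.volume_Ioc, sub_zero]
  · calc ENNReal.ofReal (cdf μ t) = volume (Ioo 0 (cdf μ t)) := by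
          rw [Real.volume_Ioo, sub_zero]
        _ ≤ volume (Iic (cdf μ t) ∩ Ioo 0 1) := by
          apply measure_mono
          rintro u ⟨h2, h3⟩
          exact ⟨h3.le, h2, lt_of_lt_of_le h3 h1⟩

lemma qf_lintegral (g : ℝ → ℝ≥0∞) (hg : Measurable g) :
    ∫⁻ u in Ioo (0:ℝ) 1, g (qf μ u) = ∫⁻ z, g z ∂μ := by
  conv_rhs => rw [← qf_map (μ := μ)]
  rw [lintegral_map' (hg.aemeasurable) qf_aemeasurable]

end StmtAux

open StmtAux ProbabilityTheory

/-- Proposition 4: under majorization by the class `E*`, for all `x ∈ (0,1)`,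
`H_X(x) ≤ (1-x)⁻¹ ∫_x^1 H_Y(u) du`. -/
theorem stmt5 {Ω : Type*} [MeasurableSpace Ω] (P : Measure Ω) [IsProbabilityMeasure P]
    (X Y : Ω → ℝ) (hX : Measurable X) (hY : Measurable Y)
    (hint : Integrable (fun ω => max 0 (Y ω)) P)
    (hmaj : ∀ a t : ℝ, 0 < a →
      (∫⁻ ω, ENNReal.ofReal (max 0 (a * (X ω - t) + 1)) ∂P)
        ≤ ∫⁻ ω, ENNReal.ofReal (max 0 (a * (Y ω - t) + 1)) ∂P) :
    ∀ x ∈ Set.Ioo (0 : ℝ) 1,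
      quantile P X x ≤ (1 - x)⁻¹ * ∫ u in x..1, quantile P Y u := by
  intro x hx
  obtain ⟨hx0, hx1⟩ := hx
  have h1x : (0:ℝ) < 1 - x := by linarith
  haveI hPX : IsProbabilityMeasure (P.map X) := Measure.isProbabilityMeasure_map hX.aemeasurable
  haveI hPY : IsProbabilityMeasure (P.map Y) := Measure.isProbabilityMeasure_map hY.aemeasurable
  set ν := P.map X with hν
  set μ := P.map Y with hμ
  -- stop-loss comparison
  have stoploss : ∀ t : ℝ, (∫⁻ ω, ENNReal.ofReal (max 0 (X ω - t)) ∂P)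
      ≤ ∫⁻ ω, ENNReal.ofReal (max 0 (Y ω - t)) ∂P := by
    intro t
    have h := hmaj 1 (t + 1) one_pos
    have e : ∀ z : ℝ, max 0 (1 * (z - (t + 1)) + 1) = max 0 (z - t) := by
      intro z; ring_nf
    simpa only [e] using h
  set q := qf ν x with hq
  set s := qf μ x with hs
  have hxIoo : x ∈ Set.Ioo (0:ℝ) 1 := ⟨hx0, hx1⟩
  -- measurable integrand
  have hgmeas : ∀ c : ℝ, Measurable (fun z : ℝ => ENNReal.ofReal (max 0 (z - c))) := by
    intro c
    exact ENNReal.measurable_ofReal.comp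
      ((measurable_const.max (measurable_id.sub measurable_const)))
  -- transfer lemmas
  have hXtrans : (∫⁻ u in Set.Ioo (0:ℝ) 1, ENNReal.ofReal (max 0 (qf ν u - s)))
      = ∫⁻ ω, ENNReal.ofReal (max 0 (X ω - s)) ∂P := by
    rw [qf_lintegral _ (hgmeas s), hν, lintegral_map (hgmeas s) hX]
  have hYtrans : (∫⁻ u in Set.Ioo (0:ℝ) 1, ENNReal.ofReal (max 0 (qf μ u - s)))
      = ∫⁻ ω, ENNReal.ofReal (max 0 (Y ω - s)) ∂P := by
    rw [qf_lintegral _ (hgmeas s), hμ, lintegral_map (hgmeas s) hY]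
  -- A := lintegral on (x,1) of (H_Y - s)
  set A : ℝ≥0∞ := ∫⁻ u in Set.Ioo x 1, ENNReal.ofReal (qf μ u - s) with hA
  -- A equals the full integral of the positive part of Y - s
  have hA_eq : A = ∫⁻ ω, ENNReal.ofReal (max 0 (Y ω - s)) ∂P := by
    rw [← hYtrans]
    have hsplit : Set.Ioo (0:ℝ) 1 = Set.Ioc 0 x ∪ Set.Ioo x 1 := by
      rw [Set.Ioc_union_Ioo_eq_Ioo hx0.le hx1]
    have hdisj : Disjoint (Set.Ioc (0:ℝ) x) (Set.Ioo x 1) :=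
      (Set.Iic_disjoint_Ioi (le_refl x)).mono Set.Ioc_subset_Iic_self
        Set.Ioo_subset_Ioi_self
    rw [hsplit, lintegral_union measurableSet_Ioo hdisj]
    have hzero : ∫⁻ u in Set.Ioc (0:ℝ) x, ENNReal.ofReal (max 0 (qf μ u - s)) = 0 := by
      rw [setLIntegral_congr_fun measurableSet_Ioc
        (fun u hu => ?_), lintegral_zero]
      have h1 : qf μ u ≤ s := qf_monotoneOn ⟨hu.1, lt_of_le_of_lt hu.2 hx1⟩ hxIoo hu.2
      have : max 0 (qf μ u - s) = 0 := max_eq_left (by linarith)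
      rw [this, ENNReal.ofReal_zero]
    rw [hzero, zero_add]
    refine setLIntegral_congr_fun measurableSet_Ioo (fun u hu => ?_)
    rw [ofReal_max0]
  -- A is finite
  have hAfin : A ≠ ⊤ := by
    rw [hA_eq]
    have hb : ∀ ω, ENNReal.ofReal (max 0 (Y ω - s))
        ≤ ENNReal.ofReal (max 0 (Y ω)) + ENNReal.ofReal |s| := by
      intro ω
      rw [← ENNReal.ofReal_add (le_max_left _ _) (abs_nonneg s)]
      apply ENNReal.ofReal_le_ofReal
      have h1 : Y ω - s ≤ max 0 (Y ω) + |s| := by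
        have := le_max_right 0 (Y ω)
        have := neg_abs_le s
        linarith
      exact max_le (by positivity) h1
    have hle := lintegral_mono (μ := P) hb
    have hfin1 : (∫⁻ ω, ENNReal.ofReal (max 0 (Y ω)) ∂P) < ⊤ :=
      (hasFiniteIntegral_iff_ofReal (ae_of_all _ fun ω => le_max_left _ _)).1
        hint.hasFiniteIntegral
    have : (∫⁻ ω, (ENNReal.ofReal (max 0 (Y ω)) + ENNReal.ofReal |s|) ∂P) < ⊤ := by
      rw [lintegral_add_right _ measurable_const, lintegral_const, measure_univ, mul_one]
      exact ENNReal.add_lt_top.2 ⟨hfin1, ENNReal.ofReal_lt_top⟩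
    exact (lt_of_le_of_lt hle this).ne
  -- X side lower bound
  have hX_low : ENNReal.ofReal (q - s) * ENNReal.ofReal (1 - x) ≤ A := by
    calc ENNReal.ofReal (q - s) * ENNReal.ofReal (1 - x)
        = ∫⁻ _ in Set.Ioo x 1, ENNReal.ofReal (q - s) := by
          rw [setLIntegral_const, Real.volume_Ioo]
      _ ≤ ∫⁻ u in Set.Ioo x 1, ENNReal.ofReal (max 0 (qf ν u - s)) := by
          refine lintegral_mono_ae ((ae_restrict_iff' measurableSet_Ioo).2
            (ae_of_all _ (fun u hu => ?_)))
          apply ENNReal.ofReal_le_ofReal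
          have h1 : q ≤ qf ν u := qf_monotoneOn hxIoo ⟨hx0.trans hu.1, hu.2⟩ hu.1.le
          exact le_trans (by linarith) (le_max_right _ _)
      _ ≤ ∫⁻ u in Set.Ioo (0:ℝ) 1, ENNReal.ofReal (max 0 (qf ν u - s)) :=
          lintegral_mono_set (Set.Ioo_subset_Ioo hx0.le le_rfl)
      _ = ∫⁻ ω, ENNReal.ofReal (max 0 (X ω - s)) ∂P := hXtrans
      _ ≤ ∫⁻ ω, ENNReal.ofReal (max 0 (Y ω - s)) ∂P := stoploss s
      _ = A := hA_eq.symm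
  -- integrability of qf μ - s on Ioo x 1
  have hqm : AEMeasurable (fun u => qf μ u - s) (volume.restrict (Set.Ioo x 1)) := by
    have : AEMeasurable (qf μ) (volume.restrict (Set.Ioo x 1)) :=
      aemeasurable_restrict_of_monotoneOn measurableSet_Ioo
        (qf_monotoneOn.mono (Set.Ioo_subset_Ioo hx0.le le_rfl))
    exact this.sub aemeasurable_const
  have hnonneg : ∀ᵐ u ∂(volume.restrict (Set.Ioo x 1)), 0 ≤ qf μ u - s := by
    refine (ae_restrict_iff' measurableSet_Ioo).2 (ae_of_all _ (fun u hu => ?_))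
    have h1 : s ≤ qf μ u := qf_monotoneOn hxIoo ⟨hx0.trans hu.1, hu.2⟩ hu.1.le
    linarith
  have hIntSub : IntegrableOn (fun u => qf μ u - s) (Set.Ioo x 1) volume := by
    refine ⟨hqm.aestronglyMeasurable, ?_⟩
    rw [hasFiniteIntegral_iff_ofReal hnonneg]
    exact lt_of_le_of_lt (le_of_eq rfl) hAfin.lt_top
  -- compute the integral
  have hvol : (volume (Set.Ioo x 1)).toReal = 1 - x := by
    rw [Real.volume_Ioo, ENNReal.toReal_ofReal (by linarith)]
  have hIntegral : (∫ u in x..1, quantile P Y u) = A.toReal + (1 - x) * s := by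
    have hqeq : ∀ u : ℝ, quantile P Y u = qf μ u := fun u => quantile_eq_qf P Y hY u
    simp only [hqeq]
    rw [intervalIntegral.integral_of_le hx1.le, integral_Ioc_eq_integral_Ioo]
    have hdecomp : ∀ u : ℝ, qf μ u = (qf μ u - s) + s := fun u => by ring
    rw [setIntegral_congr_fun measurableSet_Ioo (fun u _ => hdecomp u),
      integral_add hIntSub (integrableOn_const (C := s) (by rw [Real.volume_Ioo]; exact ENNReal.ofReal_ne_top))]
    rw [setIntegral_const, measureReal_def, hvol, smul_eq_mul]
    congr 1
    rw [integral_eq_lintegral_of_nonneg_ae hnonneg hqm.aestronglyMeasurable]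
  rw [hIntegral]
  -- final computation
  have hquant : quantile P X x = q := quantile_eq_qf P X hX x
  rw [hquant, inv_mul_eq_div, le_div_iff₀ h1x]
  rcases le_or_gt q s with hqs | hqs
  · have h0A : 0 ≤ A.toReal := ENNReal.toReal_nonneg
    nlinarith
  · have h2 : (q - s) * (1 - x) ≤ A.toReal := by
      have := ENNReal.toReal_mono hAfin hX_low
      rwa [ENNReal.toReal_mul, ENNReal.toReal_ofReal (by linarith),
        ENNReal.toReal_ofReal (by linarith)] at this
    nlinarith
end

section
/- Let H_X and H : (0,1) → ℝ with H > 0 be such that H_X(x) ≤ (1/(1−x)) ∫_x^1 H(u) du for all x ∈ (0,1), suppose ω : (0,1) → (1,∞) is non-increasing with ∫_0^1 ω(u) du < ∞, and suppose H(1 − δ(1−x)) ≤ ω(δ)H(x) for all x, δ ∈ (0,1). Then H_X(x) ≤ H(x)·∫_0^1 ω(u) du for all x ∈ (0,1). -/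
open MeasureTheory Set

/-- Proposition 5: if `H_X(x) ≤ (1-x)⁻¹ ∫_x^1 H(u) du` with `H > 0`, and
`ω : (0,1) → (1,∞)` is non-increasing with `∫_0^1 ω < ∞` and
`H(1 - δ(1-x)) ≤ ω(δ) H(x)`, then `H_X(x) ≤ H(x) ∫_0^1 ω(u) du`. -/
theorem stmt6 (HX H ω : ℝ → ℝ)
    (hHpos : ∀ x ∈ Set.Ioo (0 : ℝ) 1, 0 < H x)
    (hHX : ∀ x ∈ Set.Ioo (0 : ℝ) 1, HX x ≤ (1 - x)⁻¹ * ∫ u in x..1, H u)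
    (hω1 : ∀ u ∈ Set.Ioo (0 : ℝ) 1, 1 < ω u)
    (hωanti : AntitoneOn ω (Set.Ioo 0 1))
    (hωint : IntegrableOn ω (Set.Ioo 0 1))
    (hreg : ∀ x ∈ Set.Ioo (0 : ℝ) 1, ∀ δ ∈ Set.Ioo (0 : ℝ) 1,
      H (1 - δ * (1 - x)) ≤ ω δ * H x) :
    ∀ x ∈ Set.Ioo (0 : ℝ) 1, HX x ≤ H x * ∫ u in Set.Ioo (0 : ℝ) 1, ω u := by
  intro x hx
  obtain ⟨hx0, hx1⟩ := hx
  have h1x : (0 : ℝ) < 1 - x := by linarith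
  set c : ℝ := (1 - x)⁻¹ with hcdef
  have hcpos : 0 < c := inv_pos.mpr h1x
  have hc : c ≠ 0 := hcpos.ne'
  have hcx : (1 - x) * c = 1 := mul_inv_cancel₀ h1x.ne'
  set g : ℝ → ℝ := fun u => ω ((1 - u) * c) with hgdef
  -- ω is interval integrable on [0,1]
  have hωII : IntervalIntegrable ω volume 0 1 := by
    rw [intervalIntegrable_iff_integrableOn_Ioo_of_le zero_le_one]
    exact hωint
  -- interval integrability of g on [x,1]
  have h1 : IntervalIntegrable (fun v => ω (v * c)) volume 0 (1 - x) := by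
    have := hωII.comp_mul_right (c := c)
    have e0 : (0 : ℝ) / c = 0 := zero_div c
    have e1 : (1 : ℝ) / c = 1 - x := by
      rw [hcdef, one_div, inv_inv]
    rwa [e0, e1] at this
  have hgII : IntervalIntegrable g volume x 1 := by
    have := (h1.comp_sub_left 1).symm
    have e0 : (1 : ℝ) - 0 = 1 := by ring
    have e1 : (1 : ℝ) - (1 - x) = x := by ring
    rw [e0, e1] at this
    exact this
  -- integral of g
  have hIg : (∫ u in x..1, g u) = (1 - x) * ∫ v in (0:ℝ)..1, ω v := by
    have e1 : (∫ u in x..1, g u) = ∫ v in (1 - 1)..(1 - x), ω (v * c) :=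
      intervalIntegral.integral_comp_sub_left (fun v => ω (v * c)) 1
    have e2 : (∫ v in (0:ℝ)..(1 - x), ω (v * c))
        = c⁻¹ • ∫ v in (0 * c)..((1 - x) * c), ω v :=
      intervalIntegral.integral_comp_mul_right ω hc
    rw [e1]
    norm_num at e2 ⊢
    rw [e2, hcx, hcdef, inv_inv]
  have toIoo : ∀ f : ℝ → ℝ, (∫ u in x..1, f u) = ∫ u in Ioo x 1, f u := by
    intro f
    rw [intervalIntegral.integral_of_le hx1.le, ← Measure.restrict_congr_set Ioo_ae_eq_Ioc]
  have toIoo01 : (∫ u in Ioo (0:ℝ) 1, ω u) = ∫ v in (0:ℝ)..1, ω v := by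
    rw [intervalIntegral.integral_of_le zero_le_one,
      ← Measure.restrict_congr_set Ioo_ae_eq_Ioc]
  have hωnn : 0 ≤ ∫ u in Ioo (0:ℝ) 1, ω u :=
    setIntegral_nonneg measurableSet_Ioo fun u hu => le_of_lt (lt_trans one_pos (hω1 u hu))
  -- pointwise bound
  have hgB : ∀ u ∈ Ioo x 1, H u ≤ H x * g u := by
    intro u hu
    have hδ : (1 - u) * c ∈ Ioo (0 : ℝ) 1 := by
      constructor
      · exact mul_pos (by linarith [hu.2]) hcpos
      · calc (1 - u) * c < (1 - x) * c := by
              apply mul_lt_mul_of_pos_right _ hcpos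
              linarith [hu.1]
          _ = 1 := hcx
    have hkey : 1 - (1 - u) * c * (1 - x) = u := by
      have : (1 - u) * c * (1 - x) = (1 - u) * ((1 - x) * c) := by ring
      rw [this, hcx]; ring
    have := hreg x ⟨hx0, hx1⟩ _ hδ
    rw [hkey] at this
    calc H u ≤ ω ((1 - u) * c) * H x := this
      _ = H x * g u := by rw [hgdef]; ring
  by_cases hH : IntervalIntegrable H volume x 1
  · -- main case
    have hHIoo : IntegrableOn H (Ioo x 1) := by
      rwa [intervalIntegrable_iff_integrableOn_Ioo_of_le hx1.le] at hH
    have hgIoo : IntegrableOn g (Ioo x 1) := by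
      rwa [intervalIntegrable_iff_integrableOn_Ioo_of_le hx1.le] at hgII
    have step : (∫ u in Ioo x 1, H u) ≤ ∫ u in Ioo x 1, H x * g u := by
      apply setIntegral_mono_on hHIoo (hgIoo.const_mul (H x)) measurableSet_Ioo hgB
    have step2 : (∫ u in Ioo x 1, H x * g u) = H x * ((1 - x) * ∫ u in Ioo (0:ℝ) 1, ω u) := by
      rw [integral_const_mul, ← toIoo g, hIg, toIoo01]
    calc HX x ≤ (1 - x)⁻¹ * ∫ u in x..1, H u := hHX x ⟨hx0, hx1⟩
      _ ≤ (1 - x)⁻¹ * (H x * ((1 - x) * ∫ u in Ioo (0:ℝ) 1, ω u)) := by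
          apply mul_le_mul_of_nonneg_left _ (inv_nonneg.mpr h1x.le)
          rw [toIoo H, ← step2]; exact step
      _ = H x * ∫ u in Ioo (0:ℝ) 1, ω u := by
          field_simp
  · -- degenerate case: interval integral is 0
    have : (∫ u in x..1, H u) = 0 := intervalIntegral.integral_undef hH
    calc HX x ≤ (1 - x)⁻¹ * ∫ u in x..1, H u := hHX x ⟨hx0, hx1⟩
      _ = 0 := by rw [this, mul_zero]
      _ ≤ H x * ∫ u in Ioo (0:ℝ) 1, ω u :=
          mul_nonneg (hHpos x ⟨hx0, hx1⟩).le hωnn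
end

section
/- Let X and Y be real-valued random variables with E[max{0,Y}] < ∞ such that E[φ(X)] ≤ E[φ(Y)] for all φ(x) = max{0,a(x−t)+1}, a>0, t∈ℝ. Suppose T, γ ≥ 1, p > 1, and Q : (0,∞) → (0,∞) satisfies Q(t)·exp(−t²/(2p)) ≤ T·Q(s)·exp(−s²/(2p)) for all 0 < s < t. If P{Y > Q(t)} < γ·exp(−t²/2) for all t > 0, then P{X > (pT/(p−1))·Q(t)} ≤ γ·exp(−t²/2) for all t > 0. -/
open MeasureTheory Set Real

/-- Proposition 6 (Gaussian v): under `E*`-majorization of `X` by `Y`, if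
`Q(t) e^{-t²/(2p)} ≤ T Q(s) e^{-s²/(2p)}` for `0 < s < t` and
`P{Y > Q(t)} < γ e^{-t²/2}` for all `t > 0`, then
`P{X > (pT/(p-1)) Q(t)} ≤ γ e^{-t²/2}` for all `t > 0`. -/
theorem stmt7 {Ω : Type*} [MeasurableSpace Ω] (P : Measure Ω) [IsProbabilityMeasure P]
    (X Y : Ω → ℝ) (hX : Measurable X) (hY : Measurable Y)
    (hint : Integrable (fun ω => max 0 (Y ω)) P)
    (hmaj : ∀ a t : ℝ, 0 < a →
      (∫⁻ ω, ENNReal.ofReal (max 0 (a * (X ω - t) + 1)) ∂P)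
        ≤ ∫⁻ ω, ENNReal.ofReal (max 0 (a * (Y ω - t) + 1)) ∂P)
    (T γ p : ℝ) (hT : 1 ≤ T) (hγ : 1 ≤ γ) (hp : 1 < p)
    (Q : ℝ → ℝ) (hQpos : ∀ t > 0, 0 < Q t)
    (hQ : ∀ s t : ℝ, 0 < s → s < t →
      Q t * Real.exp (-t ^ 2 / (2 * p)) ≤ T * Q s * Real.exp (-s ^ 2 / (2 * p)))
    (hYtail : ∀ t > 0, P {ω | Q t < Y ω} < ENNReal.ofReal (γ * Real.exp (-t ^ 2 / 2))) :
    ∀ t > 0, P {ω | p * T / (p - 1) * Q t < X ω}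
      ≤ ENNReal.ofReal (γ * Real.exp (-t ^ 2 / 2)) := by
  intro t ht
  have hp1 : (0:ℝ) < p - 1 := sub_pos.2 hp
  have hppos : (0:ℝ) < p := lt_trans one_pos hp
  have hQt := hQpos t ht
  set c : ℝ := T * Q t with hc_def
  have hc : 0 < c := mul_pos (lt_of_lt_of_le one_pos hT) hQt
  set b : ℝ := c / (p - 1) with hb_def
  have hb : 0 < b := div_pos hc hp1
  set r : ℝ := (p - 1) / c with hr_def
  have hr : 0 < r := div_pos hp1 hc
  have hrb : r * b = 1 := by
    rw [hr_def, hb_def]; field_simp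
  set L : ℝ := p * T / (p - 1) * Q t with hL_def
  have hL : L = c + b := by
    rw [hL_def, hb_def, hc_def]; field_simp; ring
  set γE : ℝ := γ * Real.exp (-t ^ 2 / 2) with hγE_def
  have hγE : 0 < γE := mul_pos (lt_of_lt_of_le one_pos hγ) (Real.exp_pos _)
  -- the majorant function
  set f : ℝ → ℝ := fun s => ((c + b * s) / c) ^ (-p) with hf_def
  have hbase_pos : ∀ s : ℝ, 0 ≤ s → 0 < (c + b * s) / c := by
    intro s hs
    exact div_pos (by nlinarith) hc
  -- step 1 : Markov-type bound
  have hXmble : Measurable fun ω => ENNReal.ofReal (max 0 (r * (X ω - L) + 1)) :=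
    (measurable_const.max (((hX.sub measurable_const).const_mul r).add
      measurable_const)).ennreal_ofReal
  have step1 : P {ω | L < X ω} ≤ ∫⁻ ω, ENNReal.ofReal (max 0 (r * (X ω - L) + 1)) ∂P := by
    have hsub : {ω | L < X ω} ⊆
        {ω | (1:ENNReal) ≤ ENNReal.ofReal (max 0 (r * (X ω - L) + 1))} := by
      intro ω hω
      simp only [mem_setOf_eq] at hω ⊢
      rw [ENNReal.one_le_ofReal]
      have h1 : (1:ℝ) ≤ r * (X ω - L) + 1 := by nlinarith [mul_pos hr (sub_pos.2 hω)]
      exact h1.trans (le_max_right _ _)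
    calc P {ω | L < X ω}
        ≤ P {ω | (1:ENNReal) ≤ ENNReal.ofReal (max 0 (r * (X ω - L) + 1))} :=
          measure_mono hsub
      _ = 1 * P {ω | (1:ENNReal) ≤ ENNReal.ofReal (max 0 (r * (X ω - L) + 1))} := by
          rw [one_mul]
      _ ≤ ∫⁻ ω, ENNReal.ofReal (max 0 (r * (X ω - L) + 1)) ∂P :=
          mul_meas_ge_le_lintegral₀ hXmble.aemeasurable 1
  -- step 2 : majorization
  have step2 := hmaj r L hr
  -- step 3 : layer cake for Y
  have hYmble : Measurable fun ω => max 0 (r * (Y ω - L) + 1) :=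
    measurable_const.max (((hY.sub measurable_const).const_mul r).add measurable_const)
  have step3 : (∫⁻ ω, ENNReal.ofReal (max 0 (r * (Y ω - L) + 1)) ∂P)
      = ∫⁻ s in Ioi (0:ℝ), P {ω | s < max 0 (r * (Y ω - L) + 1)} :=
    lintegral_eq_lintegral_meas_lt P (Filter.Eventually.of_forall fun ω => le_max_left 0 _)
      hYmble.aemeasurable
  -- step 4 : pointwise tail bound
  have step4 : ∀ s ∈ Ioi (0:ℝ),
      P {ω | s < max 0 (r * (Y ω - L) + 1)} ≤ ENNReal.ofReal (γE * f s) := by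
    intro s hs
    rw [mem_Ioi] at hs
    set u : ℝ := c + b * s with hu_def
    have hcu : c < u := by rw [hu_def]; nlinarith
    have hu0 : 0 < u := hc.trans hcu
    have huc1 : 1 < u / c := (one_lt_div hc).2 hcu
    have hucpos : 0 < u / c := div_pos hu0 hc
    have hlog : 0 < Real.log (u / c) := Real.log_pos huc1
    -- rewrite the set
    have hset : {ω | s < max 0 (r * (Y ω - L) + 1)} = {ω | u < Y ω} := by
      ext ω
      simp only [mem_setOf_eq, lt_max_iff]
      constructor
      · rintro (h | h)
        · exact absurd h (not_lt.2 hs.le)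
        · have h2 : b * s < b * (r * (Y ω - L) + 1) := mul_lt_mul_of_pos_left h hb
          have h3 : b * (r * (Y ω - L) + 1) = (Y ω - L) + b := by
            rw [mul_add, ← mul_assoc, mul_comm b r, hrb, one_mul, mul_one]
          rw [h3] at h2
          rw [hu_def]
          linarith [hL]
      · intro h
        right
        have h2 : r * (u - L) < r * (Y ω - L) := mul_lt_mul_of_pos_left (by linarith) hr
        have h3 : r * (u - L) = s - 1 := by
          rw [hu_def, hL, show c + b * s - (c + b) = b * (s - 1) by ring, ← mul_assoc, hrb,
            one_mul]
        rw [h3] at h2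
        linarith
    rw [hset]
    -- choose τ
    set τ : ℝ := Real.sqrt (t ^ 2 + 2 * p * Real.log (u / c)) with hτ_def
    have harg : (0:ℝ) ≤ t ^ 2 + 2 * p * Real.log (u / c) := by positivity
    have hτsq : τ ^ 2 = t ^ 2 + 2 * p * Real.log (u / c) := Real.sq_sqrt harg
    have hτt : t < τ := by
      rw [hτ_def]
      exact (Real.lt_sqrt ht.le).2 (by nlinarith)
    have hτpos : 0 < τ := ht.trans hτt
    -- Q τ ≤ u
    have hQτ : Q τ ≤ u := by
      have h1 := hQ t τ ht hτt
      have e1 : Real.exp (-τ ^ 2 / (2 * p)) * Real.exp (τ ^ 2 / (2 * p)) = 1 := by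
        rw [← Real.exp_add, show -τ ^ 2 / (2 * p) + τ ^ 2 / (2 * p) = 0 by ring, Real.exp_zero]
      have e2 : Real.exp (-t ^ 2 / (2 * p)) * Real.exp (τ ^ 2 / (2 * p)) = u / c := by
        rw [← Real.exp_add]
        have h3 : -t ^ 2 / (2 * p) + τ ^ 2 / (2 * p) = Real.log (u / c) := by
          rw [hτsq]; field_simp; ring
        rw [h3, Real.exp_log hucpos]
      calc Q τ = Q τ * Real.exp (-τ ^ 2 / (2 * p)) * Real.exp (τ ^ 2 / (2 * p)) := by
            rw [mul_assoc, e1, mul_one]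
        _ ≤ T * Q t * Real.exp (-t ^ 2 / (2 * p)) * Real.exp (τ ^ 2 / (2 * p)) :=
            mul_le_mul_of_nonneg_right h1 (Real.exp_pos _).le
        _ = c * (Real.exp (-t ^ 2 / (2 * p)) * Real.exp (τ ^ 2 / (2 * p))) := by
            rw [hc_def]; ring
        _ = c * (u / c) := by rw [e2]
        _ = u := by field_simp
    have hmono : P {ω | u < Y ω} ≤ P {ω | Q τ < Y ω} :=
      measure_mono fun ω h => lt_of_le_of_lt hQτ h
    have heq : γ * Real.exp (-τ ^ 2 / 2) = γE * f s := by
      have hfs : f s = (u / c) ^ (-p) := by rw [hf_def]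
      have hexp : -τ ^ 2 / 2 = -t ^ 2 / 2 + Real.log (u / c) * (-p) := by rw [hτsq]; ring
      rw [hfs, Real.rpow_def_of_pos hucpos, hγE_def, hexp, Real.exp_add]; ring
    calc P {ω | u < Y ω} ≤ P {ω | Q τ < Y ω} := hmono
      _ ≤ ENNReal.ofReal (γ * Real.exp (-τ ^ 2 / 2)) := (hYtail τ hτpos).le
      _ = ENNReal.ofReal (γE * f s) := by rw [heq]
  -- step 5 : compute the integral of the majorant
  have hfnn : ∀ x ∈ Ioi (0:ℝ), 0 ≤ f x := fun x hx =>
    Real.rpow_nonneg (hbase_pos x hx.out.le).le _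
  have hderiv : ∀ s ∈ Ici (0:ℝ),
      HasDerivAt (fun s : ℝ => -((c + b * s) / c) ^ (1 - p)) (f s) s := by
    intro s hs
    have hpos := hbase_pos s hs
    have hbase : HasDerivAt (fun s : ℝ => (c + b * s) / c) (b * 1 / c) s :=
      (((hasDerivAt_id s).const_mul b).const_add c).div_const c
    have h2 : HasDerivAt (fun s : ℝ => -((c + b * s) / c) ^ (1 - p))
        (-(b * 1 / c * (1 - p) * ((c + b * s) / c) ^ (1 - p - 1))) s :=
      (hbase.rpow_const (p := 1 - p) (Or.inl hpos.ne')).neg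
    convert h2 using 1
    rw [hf_def]
    simp only
    rw [show (1:ℝ) - p - 1 = -p by ring]
    rw [show -(b * 1 / c * (1 - p) * ((c + b * s) / c) ^ (-p))
      = b * (p - 1) / c * ((c + b * s) / c) ^ (-p) by ring]
    rw [hb_def]
    rw [show c / (p - 1) * (p - 1) / c = (p - 1) / (p - 1) * (c / c) by field_simp,
      div_self hp1.ne', div_self hc.ne', one_mul, one_mul]
  have htop : Filter.Tendsto (fun s : ℝ => -((c + b * s) / c) ^ (1 - p))
      Filter.atTop (nhds 0) := by
    have h1 : Filter.Tendsto (fun s : ℝ => (c + b * s) / c) Filter.atTop Filter.atTop :=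
      (Filter.tendsto_atTop_add_const_left Filter.atTop c
        (Filter.Tendsto.const_mul_atTop hb Filter.tendsto_id)).atTop_div_const hc
    have h2 := (tendsto_rpow_neg_atTop hp1).comp h1
    have h3 := h2.neg
    rw [neg_zero] at h3
    refine h3.congr fun s => ?_
    simp only [Function.comp]
    rw [show -(p - 1) = 1 - p by ring]
  have hInt : IntegrableOn f (Ioi (0:ℝ)) :=
    integrableOn_Ioi_deriv_of_nonneg' hderiv hfnn htop
  have hval : ∫ s in Ioi (0:ℝ), f s = 1 := by
    rw [integral_Ioi_of_hasDerivAt_of_nonneg' hderiv hfnn htop]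
    rw [show c + b * 0 = c by ring, div_self hc.ne', Real.one_rpow]
    ring
  have hfm : Measurable f := by
    rw [hf_def]
    exact (((measurable_id.const_mul b).const_add c).div_const c).pow measurable_const
  have step5 : ∫⁻ s in Ioi (0:ℝ), ENNReal.ofReal (γE * f s) = ENNReal.ofReal γE := by
    rw [← ofReal_integral_eq_lintegral_ofReal (hInt.const_mul γE)
      (ae_restrict_of_forall_mem measurableSet_Ioi fun s hs =>
        mul_nonneg hγE.le (hfnn s hs))]
    rw [integral_const_mul, hval, mul_one]
  calc P {ω | L < X ω}
      ≤ ∫⁻ ω, ENNReal.ofReal (max 0 (r * (X ω - L) + 1)) ∂P := step1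
    _ ≤ ∫⁻ ω, ENNReal.ofReal (max 0 (r * (Y ω - L) + 1)) ∂P := step2
    _ = ∫⁻ s in Ioi (0:ℝ), P {ω | s < max 0 (r * (Y ω - L) + 1)} := step3
    _ ≤ ∫⁻ s in Ioi (0:ℝ), ENNReal.ofReal (γE * f s) :=
        setLIntegral_mono ((measurable_const.mul hfm).ennreal_ofReal) step4
    _ = ENNReal.ofReal γE := step5
end

section
/- Let Y be a real-valued random variable with E|Y| < ∞ and convex quantile function H_Y, and suppose |H_Y^*(δx) − H_Y^*(δy)| ≤ T·δ^{−1/p}·|H_Y^*(x) − H_Y^*(y)| holds for some p > 1, T ≥ 1 and all δ, x, y ∈ (0,1), where H_Y^*(u) = H_Y(1−u). If R > 1 satisfies T ≤ (R−1)R^{−1/p}/2, then for all x ∈ (0,1), H_Y^*(x/R) ≥ (1/x)∫_0^x H_Y^*(u) du. -/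
open MeasureTheory Set Real intervalIntegral
open scoped ENNReal

lemma quantile_set_nonempty {Ω : Type*} [MeasurableSpace Ω] (P : Measure Ω)
    [IsProbabilityMeasure P] (Y : Ω → ℝ) {v : ℝ} (hv : v < 1) :
    {t : ℝ | v ≤ (P {ω | Y ω ≤ t}).toReal}.Nonempty := by
  have hmono : Monotone (fun n : ℕ => {ω | Y ω ≤ (n : ℝ)}) := by
    intro m n hmn ω hω
    have : (m:ℝ) ≤ (n:ℝ) := by exact_mod_cast hmn
    exact le_trans hω this
  have hU : (⋃ n : ℕ, {ω | Y ω ≤ (n : ℝ)}) = univ := by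
    ext ω; simp only [mem_iUnion, mem_univ, iff_true, mem_setOf_eq]
    exact exists_nat_ge (Y ω)
  have h1 : Filter.Tendsto (fun n : ℕ => P {ω | Y ω ≤ (n : ℝ)}) Filter.atTop (nhds 1) := by
    have := tendsto_measure_iUnion_atTop (μ := P) hmono
    rwa [hU, measure_univ] at this
  have h2 : Filter.Tendsto (fun n : ℕ => (P {ω | Y ω ≤ (n : ℝ)}).toReal) Filter.atTop
      (nhds 1) := by
    have := (ENNReal.tendsto_toReal (by norm_num : (1:ℝ≥0∞) ≠ ⊤)).comp h1
    exact this
  obtain ⟨n, hn⟩ := (h2.eventually (eventually_ge_nhds hv)).exists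
  exact ⟨n, hn⟩

lemma quantile_set_bddBelow {Ω : Type*} [MeasurableSpace Ω] (P : Measure Ω)
    [IsProbabilityMeasure P] (Y : Ω → ℝ) (hY : Measurable Y) {u : ℝ} (hu : 0 < u) :
    BddBelow {t : ℝ | u ≤ (P {ω | Y ω ≤ t}).toReal} := by
  have hanti : Antitone (fun n : ℕ => {ω | Y ω ≤ -(n : ℝ)}) := by
    intro m n hmn ω hω
    have : -(n:ℝ) ≤ -(m:ℝ) := neg_le_neg (by exact_mod_cast hmn)
    exact le_trans hω this
  have hI : (⋂ n : ℕ, {ω | Y ω ≤ -(n : ℝ)}) = (∅ : Set Ω) := by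
    ext ω; simp only [mem_iInter, mem_empty_iff_false, iff_false, mem_setOf_eq, not_forall]
    obtain ⟨n, hn⟩ := exists_nat_gt (-(Y ω))
    exact ⟨n, by push_neg; linarith⟩
  have h1 : Filter.Tendsto (fun n : ℕ => P {ω | Y ω ≤ -(n : ℝ)}) Filter.atTop (nhds 0) := by
    have := tendsto_measure_iInter_atTop (μ := P)
      (fun n => (hY measurableSet_Iic).nullMeasurableSet) hanti ⟨0, measure_ne_top _ _⟩
    have heq : (⋂ n : ℕ, Y ⁻¹' Iic (-(n:ℝ))) = (∅ : Set Ω) := hI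
    rw [heq, measure_empty] at this
    exact this
  have h2 : Filter.Tendsto (fun n : ℕ => (P {ω | Y ω ≤ -(n : ℝ)}).toReal) Filter.atTop
      (nhds 0) := by
    have := (ENNReal.tendsto_toReal (by norm_num : (0:ℝ≥0∞) ≠ ⊤)).comp h1
    exact this
  obtain ⟨n, hn⟩ := (h2.eventually (eventually_lt_nhds hu)).exists
  refine ⟨-(n : ℝ), fun t ht => ?_⟩
  by_contra h
  push_neg at h
  have hmono : P {ω | Y ω ≤ t} ≤ P {ω | Y ω ≤ -(n:ℝ)} :=
    measure_mono (fun ω hω => le_trans hω h.le)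
  have := ENNReal.toReal_mono (measure_ne_top _ _) hmono
  simp only [mem_setOf_eq] at ht
  linarith

lemma quantile_monotoneOn {Ω : Type*} [MeasurableSpace Ω] (P : Measure Ω)
    [IsProbabilityMeasure P] (Y : Ω → ℝ) (hY : Measurable Y) :
    ∀ u v : ℝ, 0 < u → u ≤ v → v < 1 → quantile P Y u ≤ quantile P Y v := by
  intro u v hu huv hv
  apply csInf_le_csInf (quantile_set_bddBelow P Y hY hu) (quantile_set_nonempty P Y hv)
  intro t ht
  exact le_trans huv ht

lemma two_pow_rpow (n : ℕ) (s : ℝ) : (((2:ℝ)^n)⁻¹) ^ (-s) = ((2:ℝ)^s)^n := by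
  have h2 : (0:ℝ) < 2 ^ n := by positivity
  rw [Real.inv_rpow h2.le, Real.rpow_neg h2.le, inv_inv, ← Real.rpow_natCast (2:ℝ) n,
    ← Real.rpow_mul (by norm_num), mul_comm, Real.rpow_mul (by norm_num),
    Real.rpow_natCast]

lemma growth_bound (f : ℝ → ℝ) (p T : ℝ)
    (hanti : ∀ u ∈ Ioo (0:ℝ) 1, ∀ v ∈ Ioo (0:ℝ) 1, u ≤ v → f v ≤ f u)
    (hp : 1 < p) (hT : 1 ≤ T)
    (hreg : ∀ δ ∈ Ioo (0:ℝ) 1, ∀ x ∈ Ioo (0:ℝ) 1, ∀ y ∈ Ioo (0:ℝ) 1,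
      |f (δ * x) - f (δ * y)| ≤ T * δ ^ (-(1/p)) * |f x - f y|) :
    ∀ x ∈ Ioo (0:ℝ) 1, ∃ M : ℝ, 0 ≤ M ∧
      ∀ u ∈ Ioc (0:ℝ) x, f u ≤ f x + M * u ^ (-(1/p)) := by
  classical
  intro x hx
  obtain ⟨hx0, hx1⟩ := hx
  set r : ℝ := (2:ℝ) ^ (1/p) with hr_def
  have hp0 : (0:ℝ) < 1/p := by positivity
  have hr1 : 1 < r := Real.one_lt_rpow_iff_of_pos (by norm_num) |>.mpr
    (Or.inl ⟨one_lt_two, hp0⟩)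
  have hr0 : 0 < r := lt_trans one_pos hr1
  have hr1' : (0:ℝ) < r - 1 := by linarith
  have hmem : ∀ n : ℕ, x / 2^n ∈ Ioo (0:ℝ) 1 := by
    intro n
    constructor
    · positivity
    · calc x / 2^n ≤ x / 1 := by
            apply div_le_div_of_nonneg_left hx0.le one_pos
            exact_mod_cast Nat.one_le_two_pow
          _ < 1 := by simpa using hx1
  have hC0 : 0 ≤ f (x/2) - f x := by
    have := hanti (x/2) (by simpa using hmem 1) x ⟨hx0, hx1⟩ (by linarith)
    linarith
  set C0 : ℝ := f (x/2) - f x with hC0_def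
  have hTC : 0 ≤ T * C0 := by nlinarith
  -- one-step bound
  have hstep : ∀ n : ℕ, f (x / 2^(n+1)) ≤ f (x / 2^n) + T * C0 * r^n := by
    intro n
    rcases Nat.eq_zero_or_pos n with hn | hn
    · subst hn
      norm_num
      rw [hC0_def]
      have h1 : (0:ℝ) ≤ f (x/2) - f x := hC0
      nlinarith [mul_nonneg (sub_nonneg.2 hT) h1]
    · have h2n1 : 1 < (2:ℝ)^n := one_lt_pow₀ one_lt_two hn.ne'
      have hδ : ((2:ℝ)^n)⁻¹ ∈ Ioo (0:ℝ) 1 := by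
        constructor
        · positivity
        · rw [inv_lt_one_iff₀]; exact Or.inr h2n1
      have h := hreg _ hδ (x/2) (by simpa using hmem 1) x ⟨hx0, hx1⟩
      have e1 : ((2:ℝ)^n)⁻¹ * (x/2) = x / 2^(n+1) := by
        rw [pow_succ]; field_simp; try ring
      have e2 : ((2:ℝ)^n)⁻¹ * x = x / 2^n := by field_simp
      rw [e1, e2, two_pow_rpow, abs_of_nonneg hC0] at h
      have h2 := le_abs_self (f (x / 2^(n+1)) - f (x / 2^n))
      have : f (x / 2^(n+1)) - f (x / 2^n) ≤ T * r^n * C0 := by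
        calc f (x / 2^(n+1)) - f (x / 2^n) ≤ |f (x / 2^(n+1)) - f (x / 2^n)| := h2
          _ ≤ T * r^n * C0 := by rw [hr_def]; linarith [h]
      linarith
  -- iterated bound
  have hiter : ∀ n : ℕ, f (x / 2^n) ≤ f x + T * C0 * (∑ k ∈ Finset.range n, r^k) := by
    intro n
    induction n with
    | zero => simp
    | succ n ih =>
      calc f (x / 2^(n+1)) ≤ f (x / 2^n) + T * C0 * r^n := hstep n
        _ ≤ f x + T * C0 * (∑ k ∈ Finset.range n, r^k) + T * C0 * r^n := by linarith
        _ = f x + T * C0 * (∑ k ∈ Finset.range (n+1), r^k) := by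
            rw [Finset.sum_range_succ]; ring
  have hgeom : ∀ n : ℕ, f (x / 2^n) ≤ f x + T * C0 / (r - 1) * r^n := by
    intro n
    refine le_trans (hiter n) ?_
    have hsum : (∑ k ∈ Finset.range n, r^k) = (r^n - 1)/(r - 1) := geom_sum_eq hr1.ne' n
    have key : T * C0 * ((r^n - 1)/(r - 1)) ≤ T * C0 / (r - 1) * r^n := by
      have h1 : (r^n - 1)/(r - 1) ≤ r^n/(r - 1) :=
        (div_le_div_iff_of_pos_right hr1').mpr (by linarith)
      have h2 : T * C0 * ((r^n - 1)/(r - 1)) ≤ T * C0 * (r^n/(r - 1)) :=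
        mul_le_mul_of_nonneg_left h1 hTC
      have h3 : T * C0 * (r^n/(r - 1)) = T * C0 / (r - 1) * r^n := by
        field_simp
      linarith
    rw [hsum]
    linarith
  -- final bound
  have hM : 0 ≤ T * C0 / (r - 1) * r * x ^ (1/p) := by
    apply mul_nonneg (mul_nonneg (div_nonneg hTC hr1'.le) hr0.le)
    positivity
  refine ⟨T * C0 / (r - 1) * r * x ^ (1/p), hM, ?_⟩
  intro u hu
  obtain ⟨hu0, hux⟩ := hu
  have hex : ∃ n : ℕ, x / 2^(n+1) ≤ u := by
    obtain ⟨n, hn⟩ := pow_unbounded_of_one_lt (x/u) (one_lt_two (α := ℝ))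
    refine ⟨n, ?_⟩
    rw [div_le_iff₀ (by positivity)]
    rw [div_lt_iff₀ hu0] at hn
    calc x ≤ u * 2^n * 2 := by nlinarith [pow_pos (two_pos (α := ℝ)) n]
      _ = u * 2^(n+1) := by ring
  obtain ⟨n, hn1, hn2⟩ : ∃ n : ℕ, x / 2^(n+1) ≤ u ∧ u ≤ x / 2^n := by
    refine ⟨Nat.find hex, Nat.find_spec hex, ?_⟩
    rcases Nat.eq_zero_or_pos (Nat.find hex) with h0 | h0
    · rw [h0]; simpa using hux
    · have hlt : Nat.find hex - 1 < Nat.find hex := by omega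
      have hmin := Nat.find_min hex hlt
      push_neg at hmin
      have heq : (Nat.find hex - 1) + 1 = Nat.find hex := by omega
      rw [heq] at hmin
      exact hmin.le
  have hfu : f u ≤ f (x / 2^(n+1)) :=
    hanti _ (hmem (n+1)) u ⟨hu0, lt_of_le_of_lt hux hx1⟩ hn1
  have h2n : (2:ℝ)^n ≤ x / u := by
    rw [le_div_iff₀ hu0]
    rw [le_div_iff₀ (pow_pos two_pos n)] at hn2
    nlinarith
  have hrn : r^n ≤ x ^ (1/p) * u ^ (-(1/p)) := by
    calc r^n = ((2:ℝ)^n) ^ (1/p) := by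
          rw [← Real.rpow_natCast (2:ℝ) n, ← Real.rpow_mul (by norm_num), mul_comm,
            Real.rpow_mul (by norm_num), Real.rpow_natCast]
      _ ≤ (x/u) ^ (1/p) := Real.rpow_le_rpow (by positivity) h2n hp0.le
      _ = x ^ (1/p) * u ^ (-(1/p)) := by
          rw [Real.div_rpow hx0.le hu0.le, Real.rpow_neg hu0.le, div_eq_mul_inv]
  have hTC2 : 0 ≤ T * C0 / (r - 1) * r := mul_nonneg (div_nonneg hTC hr1'.le) hr0.le
  calc f u ≤ f (x / 2^(n+1)) := hfu
    _ ≤ f x + T * C0 / (r-1) * r^(n+1) := hgeom (n+1)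
    _ = f x + (T * C0 / (r-1) * r) * r^n := by ring
    _ ≤ f x + (T * C0 / (r-1) * r) * (x ^ (1/p) * u ^ (-(1/p))) := by
        have := mul_le_mul_of_nonneg_left hrn hTC2
        linarith
    _ = f x + T * C0 / (r - 1) * r * x ^ (1/p) * u ^ (-(1/p)) := by ring

lemma integrable_of_growth (f : ℝ → ℝ) (p : ℝ) (hp : 1 < p) {x M : ℝ}
    (hx : x ∈ Ioo (0:ℝ) 1) (hM : 0 ≤ M)
    (hanti : ∀ u ∈ Ioo (0:ℝ) 1, ∀ v ∈ Ioo (0:ℝ) 1, u ≤ v → f v ≤ f u)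
    (hbd : ∀ u ∈ Ioc (0:ℝ) x, f u ≤ f x + M * u ^ (-(1/p))) :
    IntervalIntegrable f volume 0 x := by
  obtain ⟨hx0, hx1⟩ := hx
  rw [intervalIntegrable_iff_integrableOn_Ioc_of_le hx0.le]
  have hmeas : AEMeasurable f (volume.restrict (Ioc (0:ℝ) x)) := by
    apply aemeasurable_restrict_of_antitoneOn measurableSet_Ioc
    intro u hu v hv huv
    exact hanti u ⟨hu.1, lt_of_le_of_lt hu.2 hx1⟩ v ⟨hv.1, lt_of_le_of_lt hv.2 hx1⟩ huv
  have hg : IntegrableOn (fun u => |f x| + M * u ^ (-(1/p))) (Ioc 0 x) volume := by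
    rw [← intervalIntegrable_iff_integrableOn_Ioc_of_le hx0.le]
    apply IntervalIntegrable.add intervalIntegrable_const
    exact (intervalIntegral.intervalIntegrable_rpow' (by
      have : 1/p < 1 := by
        rw [div_lt_one (by linarith)]; linarith
      linarith)).const_mul M
  apply Integrable.mono' hg hmeas.aestronglyMeasurable
  filter_upwards [ae_restrict_mem measurableSet_Ioc] with u hu
  have h1 : f u ≤ f x + M * u ^ (-(1/p)) := hbd u hu
  have h2 : f x ≤ f u :=
    hanti u ⟨hu.1, lt_of_le_of_lt hu.2 hx1⟩ x ⟨hx0, hx1⟩ hu.2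
  have h3 : 0 ≤ M * u ^ (-(1/p)) := by
    apply mul_nonneg hM (Real.rpow_nonneg hu.1.le _)
  rw [Real.norm_eq_abs, abs_le]
  constructor
  · have : -|f x| ≤ f x := neg_abs_le _
    linarith
  · have : f x ≤ |f x| := le_abs_self _
    linarith

lemma main_aux (f : ℝ → ℝ)
    (hanti : ∀ u ∈ Ioo (0:ℝ) 1, ∀ v ∈ Ioo (0:ℝ) 1, u ≤ v → f v ≤ f u)
    (hconv : ConvexOn ℝ (Ioo (0:ℝ) 1) f)
    (p T : ℝ) (hp : 1 < p) (hT : 1 ≤ T)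
    (hreg : ∀ δ ∈ Ioo (0:ℝ) 1, ∀ x ∈ Ioo (0:ℝ) 1, ∀ y ∈ Ioo (0:ℝ) 1,
      |f (δ * x) - f (δ * y)| ≤ T * δ ^ (-(1/p)) * |f x - f y|)
    (R : ℝ) (hR : 1 < R) (hTR : T ≤ (R - 1) * R ^ (-(1/p)) / 2) :
    ∀ x ∈ Ioo (0:ℝ) 1, x⁻¹ * (∫ u in (0:ℝ)..x, f u) ≤ f (x/R) := by
  intro x hx
  obtain ⟨hx0, hx1⟩ := hx
  have hR0 : (0:ℝ) < R := by linarith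
  set a : ℝ := x / R with ha_def
  have ha0 : 0 < a := by positivity
  have hax : a < x := by
    rw [ha_def, div_lt_iff₀ hR0]; nlinarith
  have ha1 : a < 1 := lt_trans hax hx1
  have haI : a ∈ Ioo (0:ℝ) 1 := ⟨ha0, ha1⟩
  have hxI : x ∈ Ioo (0:ℝ) 1 := ⟨hx0, hx1⟩
  -- integrability
  obtain ⟨M, hM0, hMbd⟩ := growth_bound f p T hanti hp hT hreg x hxI
  have hi_x : IntervalIntegrable f volume 0 x := integrable_of_growth f p hp hxI hM0 hanti hMbd
  obtain ⟨M', hM0', hMbd'⟩ := growth_bound f p T hanti hp hT hreg a haI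
  have hi_a : IntervalIntegrable f volume 0 a := integrable_of_growth f p hp haI hM0' hanti hMbd'
  have hi_ax : IntervalIntegrable f volume a x := by
    apply hi_x.mono_set
    rw [uIcc_of_le hax.le, uIcc_of_le hx0.le]
    exact Icc_subset_Icc ha0.le le_rfl
  -- integrability of composed function
  have hi_comp : IntervalIntegrable (fun v => f (R⁻¹ * v)) volume 0 x := by
    have h := hi_a.comp_mul_left (c := R⁻¹)
    have e0 : (0:ℝ) / R⁻¹ = 0 := by simp
    have e1 : a / R⁻¹ = x := by
      rw [ha_def]; field_simp
    rwa [e0, e1] at h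
  -- rpow facts
  have hRrpow : (R⁻¹ : ℝ) ^ (-(1/p)) = R ^ (1/p) := by
    rw [Real.inv_rpow hR0.le, Real.rpow_neg hR0.le, inv_inv]
  have hRp0 : 0 < R ^ (1/p) := Real.rpow_pos_of_pos hR0 _
  -- alpha and beta
  set α : ℝ := T * R ^ (1/p) / R with hα_def
  set β : ℝ := (R - 1) / (2 * R) with hβ_def
  have hα0 : 0 < α := by
    apply div_pos (mul_pos (by linarith) hRp0) hR0
  have hTR2 : T * R ^ (1/p) ≤ (R - 1) / 2 := by
    have h := mul_le_mul_of_nonneg_right hTR hRp0.le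
    have e : (R - 1) * R ^ (-(1/p)) / 2 * R ^ (1/p) = (R - 1) / 2 := by
      rw [Real.rpow_neg hR0.le]
      field_simp
    rwa [e] at h
  have hαβ : α ≤ β := by
    rw [hα_def, hβ_def, div_le_div_iff₀ hR0 (by linarith)]
    nlinarith
  have hβ1 : β < 1 := by
    rw [hβ_def, div_lt_one (by linarith)]; linarith
  have hα1 : α < 1 := lt_of_le_of_lt hαβ hβ1
  -- the three quantities
  set D : ℝ := (∫ u in (0:ℝ)..a, f u) - a * f a with hD_def
  set A : ℝ := (x - a) * f a - (∫ u in a..x, f u) with hA_def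
  set I : ℝ := (∫ u in (0:ℝ)..x, f u) - x * f x with hI_def
  have hc0 : 0 ≤ f a - f x := by
    have := hanti a haI x hxI hax.le
    linarith
  -- (2) I = D - A + x * (f a - f x)
  have hsplit : (∫ u in (0:ℝ)..a, f u) + (∫ u in a..x, f u) = ∫ u in (0:ℝ)..x, f u :=
    integral_add_adjacent_intervals hi_a hi_ax
  have hIDA : I = D - A + x * (f a - f x) := by
    rw [hI_def, hD_def, hA_def]
    linarith [hsplit]
  -- (1) D ≤ α * I
  have hD_le : D ≤ α * I := by
    have hcomp_eq : (∫ v in (0:ℝ)..x, f (v / R)) = R * (∫ u in (0:ℝ)..a, f u) := by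
      rw [integral_comp_div (f := f) (c := R) hR0.ne']
      rw [ha_def]
      norm_num [smul_eq_mul]
    have hptwise : ∀ v ∈ Ioc (0:ℝ) x,
        f (v / R) - f a ≤ T * R ^ (1/p) * (f v - f x) := by
      intro v hv
      have hvI : v ∈ Ioo (0:ℝ) 1 := ⟨hv.1, lt_of_le_of_lt hv.2 hx1⟩
      have hRinv : R⁻¹ ∈ Ioo (0:ℝ) 1 := ⟨by positivity, by
        rw [inv_lt_one_iff₀]; exact Or.inr hR⟩
      have h := hreg R⁻¹ hRinv v hvI x hxI
      rw [hRrpow] at h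
      have e1 : R⁻¹ * v = v / R := by field_simp
      have e2 : R⁻¹ * x = a := by rw [ha_def]; field_simp
      rw [e1, e2] at h
      have habs : |f v - f x| = f v - f x := abs_of_nonneg (by
        have := hanti v hvI x hxI hv.2
        linarith)
      rw [habs] at h
      calc f (v / R) - f a ≤ |f (v / R) - f a| := le_abs_self _
        _ ≤ T * R ^ (1/p) * (f v - f x) := h
    -- integrate the pointwise inequality over Ioc 0 x
    have hi_comp' : IntervalIntegrable (fun v => f (v / R)) volume 0 x := by
      have : (fun v => f (v / R)) = (fun v => f (R⁻¹ * v)) := by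
        funext v; rw [div_eq_inv_mul]
      rw [this]; exact hi_comp
    have hint_le : (∫ v in (0:ℝ)..x, (f (v / R) - f a)) ≤
        ∫ v in (0:ℝ)..x, T * R ^ (1/p) * (f v - f x) := by
      rw [intervalIntegral.integral_of_le hx0.le, intervalIntegral.integral_of_le hx0.le]
      apply setIntegral_mono_on
      · exact (hi_comp'.sub intervalIntegrable_const).1
      · exact ((hi_x.sub intervalIntegrable_const).const_mul _).1
      · exact measurableSet_Ioc
      · exact hptwise
    have lhs_eq : (∫ v in (0:ℝ)..x, (f (v / R) - f a)) = R * D := by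
      rw [intervalIntegral.integral_sub hi_comp' intervalIntegrable_const]
      rw [hcomp_eq, intervalIntegral.integral_const, hD_def]
      simp only [smul_eq_mul, sub_zero]
      rw [ha_def]; field_simp
    have rhs_eq : (∫ v in (0:ℝ)..x, T * R ^ (1/p) * (f v - f x)) = T * R ^ (1/p) * I := by
      rw [intervalIntegral.integral_const_mul]
      rw [intervalIntegral.integral_sub hi_x intervalIntegrable_const]
      rw [intervalIntegral.integral_const, hI_def]
      simp only [smul_eq_mul, sub_zero]
      try ring
    rw [lhs_eq, rhs_eq] at hint_le
    have : D ≤ T * R ^ (1/p) * I / R := by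
      rw [le_div_iff₀ hR0]; linarith
    calc D ≤ T * R ^ (1/p) * I / R := this
      _ = α * I := by rw [hα_def]; ring
  -- (3) A ≥ x * β * (f a - f x)
  have hA_ge : x * β * (f a - f x) ≤ A := by
    -- convexity chord bound
    have hchord : ∀ u ∈ Ioc a x, f u ≤ f a + (u - a)/(x - a) * (f x - f a) := by
      intro u hu
      have hxa : 0 < x - a := by linarith
      set t : ℝ := (u - a)/(x - a) with ht_def
      have ht0 : 0 ≤ t := by
        apply div_nonneg _ hxa.le; linarith [hu.1]
      have ht1 : t ≤ 1 := by
        rw [ht_def, div_le_one hxa]; linarith [hu.2]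
      have hu_eq : u = (1 - t) * a + t * x := by
        rw [ht_def]; field_simp; ring
      have h := hconv.2 haI hxI (by linarith : (0:ℝ) ≤ 1 - t) ht0 (by ring)
      simp only [smul_eq_mul] at h
      rw [← hu_eq] at h
      calc f u ≤ (1 - t) * f a + t * f x := h
        _ = f a + t * (f x - f a) := by ring
    have hcont : Continuous (fun u : ℝ => f a + (u - a)/(x - a) * (f x - f a)) :=
      continuous_const.add (((continuous_id.sub continuous_const).div_const _).mul continuous_const)
    have hint2 : (∫ u in a..x, f u) ≤ ∫ u in a..x, (f a + (u - a)/(x - a) * (f x - f a)) := by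
      rw [intervalIntegral.integral_of_le hax.le, intervalIntegral.integral_of_le hax.le]
      apply setIntegral_mono_on
      · exact hi_ax.1
      · exact (hcont.intervalIntegrable a x).1
      · exact measurableSet_Ioc
      · exact hchord
    have hval : (∫ u in a..x, (f a + (u - a)/(x - a) * (f x - f a)))
        = (x - a) * f a + (x - a) * (f x - f a) / 2 := by
      have hxa : 0 < x - a := by linarith
      have hcont2 : Continuous (fun u : ℝ => (u - a)/(x - a) * (f x - f a)) :=
        ((continuous_id.sub continuous_const).div_const _).mul continuous_const
      rw [intervalIntegral.integral_add intervalIntegrable_const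
        (hcont2.intervalIntegrable a x)]
      rw [intervalIntegral.integral_const]
      · 
        have : (∫ u in a..x, (u - a)/(x - a) * (f x - f a))
            = (∫ u in a..x, (u - a)) * ((f x - f a) / (x - a)) := by
          rw [← intervalIntegral.integral_mul_const]
          congr 1; funext u; ring
        rw [this]
        have hid : (∫ u in a..x, (u - a)) = (x - a)^2 / 2 := by
          have := intervalIntegral.integral_comp_sub_right (fun u => u) a (a := a) (b := x)
          rw [this, integral_id]
          ring
        rw [hid]
        field_simp
        ring
    have hcoef : (x - a) / 2 = x * β := by
      rw [hβ_def, ha_def]; field_simp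
    rw [hA_def]
    have hcoef2 : (x - a) / 2 * (f a - f x) = x * β * (f a - f x) := by
      rw [hcoef]
    linarith [hint2, hval, hcoef2]
  -- final algebra
  have hxc : 0 ≤ x * (f a - f x) := mul_nonneg hx0.le hc0
  have hDA : D ≤ A := by
    have h1 : D ≤ α * (D - A + x * (f a - f x)) := by rw [← hIDA]; exact hD_le
    have h2 : α * (x * (f a - f x)) ≤ β * (x * (f a - f x)) :=
      mul_le_mul_of_nonneg_right hαβ hxc
    have h3 : β * (x * (f a - f x)) ≤ A := by
      calc β * (x * (f a - f x)) = x * β * (f a - f x) := by ring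
        _ ≤ A := hA_ge
    have e : α * (D - A + x * (f a - f x)) = α * (D - A) + α * (x * (f a - f x)) := by
      ring
    have h5 : D - A ≤ α * (D - A) := by linarith
    by_contra hcon
    push_neg at hcon
    have h6 : α * (D - A) < D - A :=
      mul_lt_of_lt_one_left (by linarith) hα1
    linarith
  have hfinal : (∫ u in (0:ℝ)..x, f u) ≤ x * f a := by
    have : (∫ u in (0:ℝ)..x, f u) = D - A + x * f a := by
      rw [hD_def, hA_def]
      linarith [hsplit]
    rw [this]
    linarith
  rw [ha_def] at *
  rw [inv_mul_le_iff₀ hx0]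
  linarith [hfinal]


/-- Proposition 8 (areeae): if `H_Y` is convex, `|H_Y^*(δx) - H_Y^*(δy)| ≤ T δ^{-1/p}
|H_Y^*(x) - H_Y^*(y)|` for all `δ, x, y ∈ (0,1)`, and `R > 1` satisfies
`T ≤ (R-1) R^{-1/p} / 2`, then `H_Y^*(x/R) ≥ x⁻¹ ∫_0^x H_Y^*(u) du` for all `x ∈ (0,1)`. -/
theorem stmt9 {Ω : Type*} [MeasurableSpace Ω] (P : Measure Ω) [IsProbabilityMeasure P]
    (Y : Ω → ℝ) (hY : Measurable Y) (hint : Integrable Y P)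
    (hconv : ConvexOn ℝ (Set.Ioo (0 : ℝ) 1) (quantile P Y))
    (p T : ℝ) (hp : 1 < p) (hT : 1 ≤ T)
    (hreg : ∀ δ ∈ Set.Ioo (0 : ℝ) 1, ∀ x ∈ Set.Ioo (0 : ℝ) 1, ∀ y ∈ Set.Ioo (0 : ℝ) 1,
      |quantile P Y (1 - δ * x) - quantile P Y (1 - δ * y)|
        ≤ T * δ ^ (-(1 / p)) * |quantile P Y (1 - x) - quantile P Y (1 - y)|)
    (R : ℝ) (hR : 1 < R) (hTR : T ≤ (R - 1) * R ^ (-(1 / p)) / 2) :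
    ∀ x ∈ Set.Ioo (0 : ℝ) 1,
      x⁻¹ * (∫ u in (0 : ℝ)..x, quantile P Y (1 - u)) ≤ quantile P Y (1 - x / R) := by
  have hanti : ∀ u ∈ Ioo (0:ℝ) 1, ∀ v ∈ Ioo (0:ℝ) 1, u ≤ v →
      quantile P Y (1 - v) ≤ quantile P Y (1 - u) := by
    intro u hu v hv huv
    exact quantile_monotoneOn P Y hY (1 - v) (1 - u) (by linarith [hv.2]) (by linarith)
      (by linarith [hu.1])
  have hconv' : ConvexOn ℝ (Ioo (0:ℝ) 1) (fun u => quantile P Y (1 - u)) := by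
    refine ⟨convex_Ioo 0 1, ?_⟩
    intro u hu v hv b c hb hc hbc
    have h1 : (1:ℝ) - u ∈ Ioo (0:ℝ) 1 := ⟨by linarith [hu.2], by linarith [hu.1]⟩
    have h2 : (1:ℝ) - v ∈ Ioo (0:ℝ) 1 := ⟨by linarith [hv.2], by linarith [hv.1]⟩
    have h := hconv.2 h1 h2 hb hc hbc
    simp only [smul_eq_mul] at h ⊢
    have e : 1 - (b * u + c * v) = b * (1 - u) + c * (1 - v) := by
      linear_combination (-1 : ℝ) * hbc
    rw [e]
    exact h
  exact main_aux (fun u => quantile P Y (1 - u)) hanti hconv' p T hp hT hreg R hR hTR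
end

section
/- Let μ be a probability measure on ℝ with ∫ max{0,x} dμ(x) < ∞, let t ∈ ℝ with t > ∫ x dμ(x), and suppose μ((t,∞)) > 0. Then the function g(a) = ∫ max{0, a(x−t)+1} dμ(x) on (0,∞) is convex, and its one-sided derivative at a equals ∫_{t−1/a}^∞ (x−t) dμ(x). -/
open MeasureTheory Set Filter Topology

/-- The computational core of Proposition 1, II: `g(a) = ∫ max{0, a(x-t)+1} dμ` is convex
on `(0,∞)` and its one-sided derivative at `a` equals `∫_{[t-1/a,∞)} (x-t) dμ`. -/
theorem stmt10 (μ : Measure ℝ) [IsProbabilityMeasure μ]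
    (hpos : Integrable (fun x : ℝ => max 0 x) μ)
    (t : ℝ)
    (ht : (¬ Integrable (fun x : ℝ => x) μ) ∨ (∫ x, x ∂μ) < t)
    (htail : 0 < μ (Set.Ioi t))
    (g : ℝ → ℝ) (hg : g = fun a => ∫ x, max 0 (a * (x - t) + 1) ∂μ) :
    ConvexOn ℝ (Set.Ioi (0 : ℝ)) g ∧
      ∀ a : ℝ, 0 < a →
        HasDerivWithinAt g (∫ x in Set.Ici (t - 1 / a), (x - t) ∂μ) (Set.Iic a) a := by
  clear ht htail
  subst hg
  have hmeas : ∀ a : ℝ, AEStronglyMeasurable (fun x => max 0 (a * (x - t) + 1)) μ := by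
    intro a
    exact (Continuous.max continuous_const
      ((continuous_const.mul (continuous_id.sub continuous_const)).add
        continuous_const)).aestronglyMeasurable
  have hint0 : Integrable (fun x : ℝ => max 0 (x - t)) μ := by
    refine (hpos.add (integrable_const |t|)).mono'
      ((Continuous.max continuous_const
        (continuous_id.sub continuous_const)).aestronglyMeasurable) ?_
    filter_upwards with x
    simp only [Pi.add_apply]
    rw [Real.norm_eq_abs, abs_of_nonneg (le_max_left _ _)]
    refine max_le (by positivity) ?_
    have h1 := le_max_right (0:ℝ) x
    have h2 := neg_abs_le t
    linarith
  have hintF : ∀ a : ℝ, 0 ≤ a → Integrable (fun x => max 0 (a * (x - t) + 1)) μ := by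
    intro a ha
    refine ((hint0.const_mul a).add (integrable_const 1)).mono' (hmeas a) ?_
    filter_upwards with x
    simp only [Pi.add_apply]
    rw [Real.norm_eq_abs, abs_of_nonneg (le_max_left _ _)]
    refine max_le (by positivity) ?_
    have : a * (x - t) ≤ a * max 0 (x - t) := mul_le_mul_of_nonneg_left (le_max_right _ _) ha
    linarith
  constructor
  · refine ⟨convex_Ioi 0, ?_⟩
    intro a ha b hb p q hp hq hpq
    have ha' : (0:ℝ) < a := ha
    have hb' : (0:ℝ) < b := hb
    simp only [smul_eq_mul]
    have hint1 := hintF a (le_of_lt ha')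
    have hint2 := hintF b (le_of_lt hb')
    have hint3 := hintF (p*a+q*b) (by nlinarith)
    calc ∫ x, max 0 ((p*a+q*b)*(x-t)+1) ∂μ
        ≤ ∫ x, (p * max 0 (a*(x-t)+1) + q * max 0 (b*(x-t)+1)) ∂μ := by
          refine integral_mono hint3 ((hint1.const_mul p).add (hint2.const_mul q)) ?_
          intro x
          dsimp only
          refine max_le (add_nonneg (mul_nonneg hp (le_max_left _ _))
            (mul_nonneg hq (le_max_left _ _))) ?_
          have h1 : p * (a*(x-t)+1) ≤ p * max 0 (a*(x-t)+1) :=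
            mul_le_mul_of_nonneg_left (le_max_right _ _) hp
          have h2 : q * (b*(x-t)+1) ≤ q * max 0 (b*(x-t)+1) :=
            mul_le_mul_of_nonneg_left (le_max_right _ _) hq
          nlinarith
      _ = p * ∫ x, max 0 (a*(x-t)+1) ∂μ + q * ∫ x, max 0 (b*(x-t)+1) ∂μ := by
          rw [integral_add (hint1.const_mul p) (hint2.const_mul q),
            integral_const_mul, integral_const_mul]
  · intro a ha
    rw [hasDerivWithinAt_iff_tendsto_slope]
    have hset : Iic a \ {a} = Iio a := by
      ext y; simp [lt_iff_le_and_ne]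
    rw [hset, ← integral_indicator measurableSet_Ici]
    set l := 𝓝[Iio a] a
    have hIoo : Ioo (a/2) a ∈ l := Ioo_mem_nhdsLT_of_mem ⟨by linarith, le_refl a⟩
    have hmem : ∀ᶠ b in l, b ∈ Iio a := eventually_mem_nhdsWithin
    set Q : ℝ → ℝ → ℝ :=
      fun b x => (max 0 (b*(x-t)+1) - max 0 (a*(x-t)+1)) / (b - a) with hQ
    have key : Tendsto (fun b => ∫ x, Q b x ∂μ) l
        (𝓝 (∫ x, (Ici (t - 1/a)).indicator (fun x => x - t) x ∂μ)) := by
      refine tendsto_integral_filter_of_dominated_convergence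
        (fun x => max 0 (x - t) + 2/a) ?_ ?_ ?_ ?_
      · -- measurability
        filter_upwards with b
        have c1 : Continuous fun x : ℝ => b * (x - t) + 1 :=
          (continuous_const.mul (continuous_id.sub continuous_const)).add continuous_const
        have c2 : Continuous fun x : ℝ => a * (x - t) + 1 :=
          (continuous_const.mul (continuous_id.sub continuous_const)).add continuous_const
        exact (((Continuous.max continuous_const c1).sub
          (Continuous.max continuous_const c2)).div_const _).aestronglyMeasurable
      · -- bound
        filter_upwards [hIoo] with b hb
        filter_upwards with x
        rcases le_or_gt t x with hx | hx
        · have hb1 : (0:ℝ) < b := by have := hb.1; linarith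
          have e1 : max 0 (b*(x-t)+1) = b*(x-t)+1 :=
            max_eq_right (by nlinarith)
          have e2 : max 0 (a*(x-t)+1) = a*(x-t)+1 :=
            max_eq_right (by nlinarith)
          have hba : b - a ≠ 0 := by have := hb.2; intro h; linarith [sub_eq_zero.mp h]
          have : Q b x = x - t := by
            rw [hQ]; simp only [e1, e2]; rw [div_eq_iff hba]; ring
          rw [this, Real.norm_eq_abs, abs_of_nonneg (by linarith)]
          have h4 : x - t ≤ max 0 (x - t) := le_max_right _ _
          have h5 : (0:ℝ) < 2/a := by positivity
          linarith
        · rcases le_or_gt (t - x) (2/a) with hx2 | hx2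
          · have hlip : |max 0 (b*(x-t)+1) - max 0 (a*(x-t)+1)|
                ≤ |(b*(x-t)+1) - (a*(x-t)+1)| := by
              rw [max_comm 0 (b*(x-t)+1), max_comm 0 (a*(x-t)+1)]
              exact abs_max_sub_max_le_abs _ _ _
            have hba : b - a ≠ 0 := by have := hb.2; intro h; linarith [sub_eq_zero.mp h]
            have : ‖Q b x‖ ≤ |x - t| := by
              rw [hQ, Real.norm_eq_abs, abs_div]
              rw [div_le_iff₀ (abs_pos.mpr hba)]
              calc |max 0 (b*(x-t)+1) - max 0 (a*(x-t)+1)| ≤ |(b*(x-t)+1) - (a*(x-t)+1)| := hlip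
                _ = |x - t| * |b - a| := by
                    rw [← abs_mul]; ring_nf
              
            have h3 : |x - t| = t - x := by rw [abs_of_nonpos (by linarith)]; ring
            have := le_max_left (0:ℝ) (x - t)
            linarith
          · have hb1 : a/2 < b := hb.1
            have hbt : b * (t - x) > 1 := by
              have h1 : (a/2) * (2/a) < b * (t - x) :=
                mul_lt_mul'' hb1 hx2 (by positivity) (by positivity)
              have h2 : (a/2) * (2/a) = 1 := by field_simp
              linarith
            have hat : a * (t - x) > 2 := by
              have h1 : a * (2/a) < a * (t - x) := mul_lt_mul_of_pos_left hx2 ha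
              have h2 : a * (2/a) = 2 := by field_simp
              linarith
            have e1 : max 0 (b*(x-t)+1) = 0 := max_eq_left (by nlinarith)
            have e2 : max 0 (a*(x-t)+1) = 0 := max_eq_left (by nlinarith)
            have : Q b x = 0 := by rw [hQ]; simp [e1, e2]
            rw [this, norm_zero]
            positivity
      · exact hint0.add (integrable_const (2/a))
      · -- pointwise limit
        filter_upwards with x
        rcases lt_trichotomy x (t - 1/a) with hx | hx | hx
        · have hind : (Ici (t - 1/a)).indicator (fun x => x - t) x = 0 :=
            indicator_of_notMem (by simp only [mem_Ici, not_le]; exact hx) _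
          rw [hind]
          have hopen : ∀ᶠ b in l, b*(x-t)+1 < 0 := by
            have hcont : Continuous (fun b : ℝ => b*(x-t)+1) :=
              (continuous_id.mul continuous_const).add continuous_const
            have ha0 : a*(x-t)+1 < 0 := by
              have : a * (x - t) < a * (-(1/a)) :=
                mul_lt_mul_of_pos_left (by linarith) ha
              have h2 : a * (-(1/a)) = -1 := by field_simp
              linarith
            have := hcont.continuousAt (x := a) |>.eventually_lt_const ha0
            exact this.filter_mono nhdsWithin_le_nhds
          refine Tendsto.congr' ?_ tendsto_const_nhds
          filter_upwards [hopen] with b hb0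
          have ha0 : a*(x-t)+1 < 0 := by
            have : a * (x - t) < a * (-(1/a)) :=
              mul_lt_mul_of_pos_left (by linarith) ha
            have h2 : a * (-(1/a)) = -1 := by field_simp
            linarith
          show (0:ℝ) = Q b x
          have hq : Q b x = (max 0 (b*(x-t)+1) - max 0 (a*(x-t)+1)) / (b - a) := rfl
          rw [hq, max_eq_left (le_of_lt hb0), max_eq_left (le_of_lt ha0)]
          simp
        · have hind : (Ici (t - 1/a)).indicator (fun x => x - t) x = x - t :=
            indicator_of_mem (by simp [hx]) _
          rw [hind]
          refine Tendsto.congr' ?_ tendsto_const_nhds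
          filter_upwards [hmem] with b hb0
          have hxt : x - t = -(1/a) := by rw [hx]; ring
          have e2 : max 0 (a*(x-t)+1) = 0 := by
            rw [hxt]
            have : a * (-(1/a)) = -1 := by field_simp
            rw [this]; norm_num
          have e1 : max 0 (b*(x-t)+1) = b*(x-t)+1 := by
            rw [hxt]
            refine max_eq_right ?_
            have hblt : b < a := hb0
            have : b * (1/a) < a * (1/a) := by
              apply mul_lt_mul_of_pos_right hblt (by positivity)
            have h2 : a * (1/a) = 1 := by field_simp
            nlinarith
          have hba : b - a ≠ 0 := by intro h; have := sub_eq_zero.mp h; have hblt : b < a := hb0; linarith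
          show x - t = Q b x
          have hq : Q b x = (max 0 (b*(x-t)+1) - max 0 (a*(x-t)+1)) / (b - a) := rfl
          rw [hq, e1, e2, hxt]
          field_simp
          ring
        · have hind : (Ici (t - 1/a)).indicator (fun x => x - t) x = x - t :=
            indicator_of_mem (le_of_lt hx) _
          rw [hind]
          have ha0 : 0 < a*(x-t)+1 := by
            have : a * (-(1/a)) < a * (x - t) :=
              mul_lt_mul_of_pos_left (by linarith) ha
            have h2 : a * (-(1/a)) = -1 := by field_simp
            linarith
          have hopen : ∀ᶠ b in l, 0 < b*(x-t)+1 := by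
            have hcont : Continuous (fun b : ℝ => b*(x-t)+1) :=
              (continuous_id.mul continuous_const).add continuous_const
            exact (hcont.continuousAt (x := a) |>.eventually_const_lt ha0).filter_mono
              nhdsWithin_le_nhds
          refine Tendsto.congr' ?_ tendsto_const_nhds
          filter_upwards [hopen, hmem] with b hb0 hblt
          have hba : b - a ≠ 0 := by intro h; have := sub_eq_zero.mp h; have : b < a := hblt; linarith
          show x - t = Q b x
          have hq : Q b x = (max 0 (b*(x-t)+1) - max 0 (a*(x-t)+1)) / (b - a) := rfl
          rw [hq, max_eq_right (le_of_lt hb0), max_eq_right (le_of_lt ha0)]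
          field_simp
          ring
    refine key.congr' ?_
    filter_upwards [hIoo] with b hb
    have hb0 : (0:ℝ) < b := by have := hb.1; linarith
    have hba : b - a ≠ 0 := by have := hb.2; intro h; linarith [sub_eq_zero.mp h]
    have hintb := hintF b (le_of_lt hb0)
    have hinta := hintF a (le_of_lt ha)
    have hq : ∫ x, Q b x ∂μ
        = ∫ x, (max 0 (b*(x-t)+1) - max 0 (a*(x-t)+1)) / (b - a) ∂μ := rfl
    rw [hq, integral_div, integral_sub hintb hinta, slope_def_field]
end

section
/- Let Y be a non-negative random variable and r ∈ (1,∞), and suppose t ↦ (P{Y ≥ t})^{−1/r} is convex on [0,∞). Let X be a random variable such that E[max{X−a, 0}] ≤ E[max{Y−a, 0}] for all a > 0. Then for all t ≥ 0, P{X ≥ t} ≤ (1 − 1/r)^{−r}·P{Y ≥ t}. -/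
open MeasureTheory Set Real


lemma kemp_aux_int {c m r : ℝ} (hc : 0 < c) (hm : 0 < m) (hr : 1 < r) :
    ∫⁻ s in Ioi (0:ℝ), ENNReal.ofReal ((c + m * s) ^ (-r))
      = ENNReal.ofReal (c ^ (1 - r) / (m * (r - 1))) := by
  have hr0 : (0:ℝ) < r := lt_trans one_pos hr
  set g : ℝ → ℝ := fun s => (c + m * s) ^ (1 - r) / (m * (1 - r)) with hg
  have hpos : ∀ x : ℝ, 0 ≤ x → 0 < c + m * x := fun x hx => by positivity
  have hderiv : ∀ x ∈ Ici (0:ℝ), HasDerivAt g ((c + m * x) ^ (-r)) x := by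
    intro x hx
    have h1 : HasDerivAt (fun y : ℝ => c + m * y) m x := by
      simpa using ((hasDerivAt_id x).const_mul m).const_add c
    have h2 : HasDerivAt (fun y : ℝ => (c + m * y) ^ (1 - r))
        (m * (1 - r) * (c + m * x) ^ ((1 - r) - 1)) x :=
      h1.rpow_const (Or.inl (hpos x hx).ne')
    have h3 := h2.div_const (m * (1 - r))
    have hne : m * (1 - r) ≠ 0 := by
      apply mul_ne_zero hm.ne'
      intro h; rw [sub_eq_zero] at h; exact (lt_irrefl _ (h ▸ hr))
    refine h3.congr_deriv ?_
    rw [show (1 - r) - 1 = -r by ring, mul_comm (m * (1 - r)), mul_div_assoc,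
      div_self hne, mul_one]
  have hnn : ∀ x ∈ Ioi (0:ℝ), 0 ≤ (c + m * x) ^ (-r) := fun x hx =>
    rpow_nonneg (hpos x (le_of_lt hx)).le _
  have htend : Filter.Tendsto g Filter.atTop (nhds (0 / (m * (1 - r)))) := by
    apply Filter.Tendsto.div_const
    have h1 : Filter.Tendsto (fun s : ℝ => c + m * s) Filter.atTop Filter.atTop :=
      Filter.tendsto_atTop_add_const_left _ c (Filter.Tendsto.const_mul_atTop hm Filter.tendsto_id)
    have h2 : Filter.Tendsto (fun y : ℝ => y ^ (-(r - 1))) Filter.atTop (nhds 0) :=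
      tendsto_rpow_neg_atTop (by linarith)
    have := h2.comp h1
    simpa [neg_sub, Function.comp_def] using this
  rw [zero_div] at htend
  have hint := integrableOn_Ioi_deriv_of_nonneg' hderiv hnn htend
  have hval := integral_Ioi_of_hasDerivAt_of_nonneg' hderiv hnn htend
  rw [← ofReal_integral_eq_lintegral_ofReal hint
    ((ae_restrict_iff' measurableSet_Ioi).2 (Filter.Eventually.of_forall
      fun x hx => rpow_nonneg (hpos x (le_of_lt hx)).le _))]
  · congr 1
    rw [hval]
    simp only [hg, mul_zero, add_zero, zero_sub]
    rw [show m * (1 - r) = -(m * (r - 1)) by ring, div_neg, neg_neg]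


lemma kemp_left_cont {Ω : Type*} [MeasurableSpace Ω] (P : Measure Ω) [IsProbabilityMeasure P]
    (Y : Ω → ℝ) (hY : Measurable Y) {t : ℝ} (ht : 0 < t) {q : ENNReal}
    (h : ∀ a, 0 < a → a < t → q ≤ P {ω | a ≤ Y ω}) :
    q ≤ P {ω | t ≤ Y ω} := by
  set A : ℕ → Set Ω := fun n => {ω | t - t / (n + 2) ≤ Y ω} with hA
  have hmeas : ∀ n, MeasurableSet (A n) := fun n => measurableSet_le measurable_const hY
  have hanti : Antitone A := by
    intro n k hnk ω hω
    simp only [hA, mem_setOf_eq] at hω ⊢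
    have h1 : t / ((k:ℝ) + 2) ≤ t / ((n:ℝ) + 2) := by
      apply div_le_div_of_nonneg_left ht.le (by positivity)
      have := (Nat.cast_le (α := ℝ)).2 hnk
      linarith
    linarith
  have hiInter : ⋂ n, A n = {ω | t ≤ Y ω} := by
    ext ω
    simp only [mem_iInter, hA, mem_setOf_eq]
    constructor
    · intro hω
      by_contra hlt
      push_neg at hlt
      obtain ⟨n, hn⟩ := exists_nat_gt (t / (t - Y ω))
      have hd : 0 < t - Y ω := by linarith
      have h1 : t / ((n:ℝ) + 2) < t - Y ω := by
        rw [div_lt_iff₀ (by positivity)]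
        have h2 : t < (t - Y ω) * n := by
          rw [div_lt_iff₀ hd] at hn
          linarith
        nlinarith [hd]
      linarith [hω n]
    · intro hω n
      have : 0 ≤ t / ((n:ℝ) + 2) := by positivity
      linarith
  have htend := tendsto_measure_iInter_atTop (μ := P)
    (fun n => (hmeas n).nullMeasurableSet) hanti ⟨0, measure_ne_top P _⟩
  rw [hiInter] at htend
  refine ge_of_tendsto' htend fun n => h _ ?_ ?_
  · have : t / ((n:ℝ) + 2) < t := by
      apply div_lt_self ht
      have : (0:ℝ) ≤ (n:ℝ) := Nat.cast_nonneg n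
      linarith
    linarith
  · have : 0 < t / ((n:ℝ) + 2) := by positivity
    linarith


/-- Kemperman's tail comparison theorem: if `Y ≥ 0`, `r ∈ (1,∞)`,
`t ↦ (P{Y ≥ t})^{-1/r}` is convex on the part of `[0,∞)` where `P{Y ≥ t} > 0`,
and `E max{X-a, 0} ≤ E max{Y-a, 0}` for all `a > 0`, then
`P{X ≥ t} ≤ (1 - 1/r)^{-r} P{Y ≥ t}` for all `t ≥ 0`. -/
theorem stmt13 {Ω : Type*} [MeasurableSpace Ω] (P : Measure Ω) [IsProbabilityMeasure P]
    (X Y : Ω → ℝ) (hX : Measurable X) (hY : Measurable Y)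
    (hYpos : ∀ ω, 0 ≤ Y ω)
    (r : ℝ) (hr : 1 < r)
    (hconv : ConvexOn ℝ {t : ℝ | 0 ≤ t ∧ 0 < P {ω | t ≤ Y ω}}
      (fun t => (P {ω | t ≤ Y ω}).toReal ^ (-(1 / r))))
    (hmaj : ∀ a : ℝ, 0 < a →
      (∫⁻ ω, ENNReal.ofReal (max (X ω - a) 0) ∂P)
        ≤ ∫⁻ ω, ENNReal.ofReal (max (Y ω - a) 0) ∂P) :
    ∀ t : ℝ, 0 ≤ t →
      P {ω | t ≤ X ω} ≤ ENNReal.ofReal ((1 - 1 / r) ^ (-r)) * P {ω | t ≤ Y ω} := by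
  intro t ht
  have hr0 : (0:ℝ) < r := lt_trans one_pos hr
  have h1r : (0:ℝ) < 1 - 1/r := by
    have : 1/r < 1 := by rw [div_lt_one hr0]; exact hr
    linarith
  have hR1 : (1:ℝ) ≤ (1 - 1/r) ^ (-r) := by
    apply Real.one_le_rpow_of_pos_of_le_one_of_nonpos h1r
    · have : 0 < 1/r := by positivity
      linarith
    · linarith
  have hEone : (1:ENNReal) ≤ ENNReal.ofReal ((1 - 1/r) ^ (-r)) := by
    rw [← ENNReal.ofReal_one]; exact ENNReal.ofReal_le_ofReal hR1
  have hXmeas : MeasurableSet {ω | t ≤ X ω} := measurableSet_le measurable_const hX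
  have hYmeasS : ∀ s : ℝ, MeasurableSet {ω | s ≤ Y ω} := fun s =>
    measurableSet_le measurable_const hY
  have hGanti : ∀ s s' : ℝ, s ≤ s' → P {ω | s' ≤ Y ω} ≤ P {ω | s ≤ Y ω} :=
    fun s s' hss' => measure_mono fun ω hω => le_trans hss' hω
  have hG0 : P {ω | (0:ℝ) ≤ Y ω} = 1 := by
    rw [show {ω | (0:ℝ) ≤ Y ω} = univ from eq_univ_of_forall hYpos, measure_univ]
  have hGfin : ∀ s : ℝ, P {ω | s ≤ Y ω} ≠ ⊤ := fun s => measure_ne_top P _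
  -- Markov inequality
  have markov : ∀ a : ℝ, a < t →
      ENNReal.ofReal (t - a) * P {ω | t ≤ X ω}
        ≤ ∫⁻ ω, ENNReal.ofReal (max (X ω - a) 0) ∂P := by
    intro a ha
    calc ENNReal.ofReal (t - a) * P {ω | t ≤ X ω}
        = ∫⁻ _ in {ω | t ≤ X ω}, ENNReal.ofReal (t - a) ∂P := (setLIntegral_const _ _).symm
      _ ≤ ∫⁻ ω in {ω | t ≤ X ω}, ENNReal.ofReal (max (X ω - a) 0) ∂P := by
          apply setLIntegral_mono' hXmeas
          intro ω hω
          simp only [mem_setOf_eq] at hω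
          exact ENNReal.ofReal_le_ofReal (le_max_of_le_left (by linarith))
      _ ≤ ∫⁻ ω, ENNReal.ofReal (max (X ω - a) 0) ∂P := setLIntegral_le_lintegral _ _
  rcases eq_or_lt_of_le ht with htz | htpos
  · -- case t = 0
    subst htz
    calc P {ω | (0:ℝ) ≤ X ω} ≤ 1 := prob_le_one
      _ ≤ ENNReal.ofReal ((1 - 1/r) ^ (-(r:ℝ))) * 1 := by
          rw [mul_one]; exact hEone
      _ = _ := by rw [hG0]
  by_cases hbig : ENNReal.ofReal ((1 - 1/r) ^ r) ≤ P {ω | t ≤ Y ω}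
  · -- trivial case: P{Y ≥ t} large
    calc P {ω | t ≤ X ω} ≤ 1 := prob_le_one
      _ = ENNReal.ofReal ((1 - 1/r) ^ (-r)) * ENNReal.ofReal ((1 - 1/r) ^ r) := by
          rw [← ENNReal.ofReal_mul (rpow_nonneg h1r.le _), ← Real.rpow_add h1r]
          norm_num
      _ ≤ _ := mul_le_mul_right hbig _
  push_neg at hbig
  by_cases htail : ∀ s : ℝ, t < s → P {ω | s ≤ Y ω} = 0
  · -- case: Y ≤ t a.s.
    have hYae : ∀ᵐ ω ∂P, Y ω ≤ t := by
      have hnull : P {ω | t < Y ω} = 0 := by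
        have hsub : {ω | t < Y ω} ⊆ ⋃ n : ℕ, {ω | t + 1/((n:ℝ)+1) ≤ Y ω} := by
          intro ω hω
          simp only [mem_setOf_eq] at hω
          obtain ⟨n, hn⟩ := exists_nat_one_div_lt (sub_pos.2 hω)
          exact mem_iUnion.2 ⟨n, by simp only [mem_setOf_eq]; push_cast at hn ⊢; linarith⟩
        refine measure_mono_null hsub (measure_iUnion_null fun n => htail _ ?_)
        have : 0 < 1/((n:ℝ)+1) := by positivity
        linarith
      rw [ae_iff]
      convert hnull using 2
      ext ω; simp [not_le]
    have key : ∀ a, 0 < a → a < t → P {ω | t ≤ X ω} ≤ P {ω | a ≤ Y ω} := by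
      intro a ha0 hat
      have hb : (∫⁻ ω, ENNReal.ofReal (max (Y ω - a) 0) ∂P)
          ≤ ENNReal.ofReal (t - a) * P {ω | a ≤ Y ω} := by
        calc ∫⁻ ω, ENNReal.ofReal (max (Y ω - a) 0) ∂P
            ≤ ∫⁻ ω, {ω' | a ≤ Y ω'}.indicator (fun _ => ENNReal.ofReal (t - a)) ω ∂P := by
              apply lintegral_mono_ae
              filter_upwards [hYae] with ω hω
              by_cases haY : ω ∈ {ω' | a ≤ Y ω'}
              · rw [indicator_of_mem haY]
                exact ENNReal.ofReal_le_ofReal (max_le (by linarith) (by linarith))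
              · rw [indicator_of_notMem haY]
                simp only [mem_setOf_eq, not_le] at haY
                rw [max_eq_right (by linarith), ENNReal.ofReal_zero]
          _ = ENNReal.ofReal (t - a) * P {ω | a ≤ Y ω} := by
              rw [lintegral_indicator (hYmeasS a), setLIntegral_const]
      have hchain := le_trans (le_trans (markov a hat) (hmaj a ha0)) hb
      have hne0 : ENNReal.ofReal (t - a) ≠ 0 := (ENNReal.ofReal_pos.2 (by linarith)).ne'
      exact (ENNReal.mul_le_mul_iff_right hne0 ENNReal.ofReal_ne_top).1 hchain
    calc P {ω | t ≤ X ω} ≤ P {ω | t ≤ Y ω} := kemp_left_cont P Y hY htpos key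
      _ = 1 * P {ω | t ≤ Y ω} := (one_mul _).symm
      _ ≤ _ := mul_le_mul_left hEone _
  -- main case
  push_neg at htail
  obtain ⟨t', htt', hGt'⟩ := htail
  have hGt'pos : 0 < P {ω | t' ≤ Y ω} := pos_iff_ne_zero.mpr hGt'
  have hGtpos : 0 < P {ω | t ≤ Y ω} := lt_of_lt_of_le hGt'pos (hGanti _ _ htt'.le)
  set D : Set ℝ := {s : ℝ | 0 ≤ s ∧ 0 < P {ω | s ≤ Y ω}} with hD
  set f : ℝ → ℝ := fun s => (P {ω | s ≤ Y ω}).toReal ^ (-(1/r)) with hf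
  have h0D : (0:ℝ) ∈ D := ⟨le_refl 0, by rw [hG0]; norm_num⟩
  have htD : t ∈ D := ⟨ht, hGtpos⟩
  have ht'D : t' ∈ D := ⟨by linarith, hGt'pos⟩
  set x := (P {ω | t ≤ Y ω}).toReal with hx
  have hx0 : 0 < x := ENNReal.toReal_pos hGtpos.ne' (hGfin t)
  have hut : f t = x ^ (-(1/r)) := rfl
  set u := x ^ (-(1/r)) with hu
  have hupos : 0 < u := rpow_pos_of_pos hx0 _
  have hxlt : x < (1 - 1/r) ^ r :=
    (ENNReal.lt_ofReal_iff_toReal_lt (hGfin t)).1 hbig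
  have hrr : r / (r - 1) < u := by
    have h1 : ((1 - 1/r) ^ r) ^ (-(1/r)) < x ^ (-(1/r)) := by
      apply Real.rpow_lt_rpow_of_neg hx0 hxlt
      have : 0 < 1/r := by positivity
      linarith
    have h2 : ((1 - 1/r) ^ r) ^ (-(1/r)) = r / (r - 1) := by
      rw [← Real.rpow_mul h1r.le, show r * (-(1/r)) = -1 by field_simp,
        Real.rpow_neg_one, show (1:ℝ) - 1/r = (r-1)/r by field_simp, inv_div]
    rw [← h2]; exact h1
  have hu1 : 1 < u := by
    have h3 : 1 < r/(r-1) := by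
      rw [lt_div_iff₀ (by linarith : (0:ℝ) < r - 1)]; linarith
    linarith
  -- subgradient of f at t
  set Sl : Set ℝ := (fun s => (f s - f t)/(s - t)) '' {s | s ∈ D ∧ t < s} with hSl
  have hSlne : Sl.Nonempty := ⟨_, ⟨t', ⟨ht'D, htt'⟩, rfl⟩⟩
  have hlb : ∀ s ∈ D, s < t → ∀ z ∈ Sl, (f t - f s)/(t - s) ≤ z := by
    intro s hs hst z hz
    obtain ⟨σ, ⟨hσD, htσ⟩, rfl⟩ := hz
    have hsec := hconv.secant_mono htD hs hσD hst.ne htσ.ne' (le_of_lt (lt_trans hst htσ))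
    calc (f t - f s)/(t - s) = (f s - f t)/(s - t) := by
          rw [← neg_div_neg_eq]; ring_nf
      _ ≤ _ := hsec
  have hBdd : BddBelow Sl := ⟨(f t - f 0)/(t - 0), fun z hz => hlb 0 h0D htpos z hz⟩
  set m := sInf Sl with hm
  have hmlb : (f t - f 0)/(t - 0) ≤ m := le_csInf hSlne (fun z hz => hlb 0 h0D htpos z hz)
  have hf0 : f 0 = 1 := by
    simp only [hf, hG0, ENNReal.toReal_one, Real.one_rpow]
  have hmpos : 0 < m := by
    apply lt_of_lt_of_le _ hmlb
    rw [hf0, hut, sub_zero]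
    apply div_pos (by linarith) htpos
  have hsub : ∀ s ∈ D, f t + m * (s - t) ≤ f s := by
    intro s hsD
    rcases lt_trichotomy s t with hst | hst | hts
    · have h1 : (f t - f s)/(t - s) ≤ m := le_csInf hSlne (hlb s hsD hst)
      rw [div_le_iff₀ (by linarith : (0:ℝ) < t - s)] at h1
      linarith
    · subst hst; simp
    · have h1 : m ≤ (f s - f t)/(s - t) := csInf_le hBdd ⟨s, ⟨hsD, hts⟩, rfl⟩
      rw [le_div_iff₀ (by linarith : (0:ℝ) < s - t)] at h1
      linarith
  have hmrt : u < m * r * t := by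
    have h2 : (u - 1)/t ≤ m := by
      rw [hf0, hut, sub_zero] at hmlb; exact hmlb
    have h3 : u - 1 ≤ m * t := (div_le_iff₀ htpos).1 h2
    have h4 : r < u * (r - 1) := (div_lt_iff₀ (by linarith : (0:ℝ) < r - 1)).1 hrr
    nlinarith
  set a := t - u/(m*r) with ha
  have hat : a < t := by
    have : 0 < u/(m*r) := by positivity
    rw [ha]; linarith
  have ha0 : 0 < a := by
    rw [ha, sub_pos, div_lt_iff₀ (by positivity : (0:ℝ) < m*r)]
    nlinarith
  set c := u * (1 - 1/r) with hc
  have hcpos : 0 < c := by positivity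
  have hca : c = u + m * (a - t) := by
    rw [hc, ha]
    have hmr : m * r ≠ 0 := by positivity
    field_simp
    ring
  -- pointwise tail bound
  have hptw : ∀ s : ℝ, s ∈ Ioi (0:ℝ) →
      P {ω | a + s ≤ Y ω} ≤ ENNReal.ofReal ((c + m * s) ^ (-r)) := by
    intro s hs
    simp only [mem_Ioi] at hs
    by_cases hGσ : P {ω | a + s ≤ Y ω} = 0
    · rw [hGσ]; exact zero_le
    · have hσD : (a + s) ∈ D := ⟨by linarith, pos_iff_ne_zero.2 hGσ⟩
      have h1 : c + m * s ≤ f (a+s) := by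
        have h1' := hsub _ hσD
        rw [hut] at h1'
        rw [hca]
        calc u + m * (a - t) + m * s = u + m * ((a + s) - t) := by ring
          _ ≤ f (a+s) := h1'
      have hlpos : 0 < c + m * s := by positivity
      have hxσ0 : 0 < (P {ω | a + s ≤ Y ω}).toReal :=
        ENNReal.toReal_pos hGσ (hGfin _)
      have h2 : f (a+s) ^ (-r) = (P {ω | a + s ≤ Y ω}).toReal := by
        rw [hf]
        rw [← Real.rpow_mul hxσ0.le, show (-(1/r)) * (-r) = 1 by field_simp,
          Real.rpow_one]
      have h3 : f (a+s) ^ (-r) ≤ (c + m*s) ^ (-r) :=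
        Real.rpow_le_rpow_of_nonpos hlpos h1 (by linarith)
      calc P {ω | a + s ≤ Y ω}
          = ENNReal.ofReal ((P {ω | a + s ≤ Y ω}).toReal) :=
            (ENNReal.ofReal_toReal (hGfin _)).symm
        _ ≤ ENNReal.ofReal ((c + m*s)^(-r)) :=
            ENNReal.ofReal_le_ofReal (h2 ▸ h3)
  -- layer cake
  have hlc : (∫⁻ ω, ENNReal.ofReal (max (Y ω - a) 0) ∂P)
      = ∫⁻ s in Ioi (0:ℝ), P {ω | a + s ≤ Y ω} := by
    rw [lintegral_eq_lintegral_meas_le (f := fun ω => max (Y ω - a) 0) P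
      (Filter.Eventually.of_forall fun ω => le_max_right _ _)
      ((hY.sub measurable_const).max measurable_const).aemeasurable]
    refine setLIntegral_congr_fun measurableSet_Ioi
      (fun s hs => ?_)
    simp only [mem_Ioi] at hs
    congr 1
    ext ω
    simp only [mem_setOf_eq, le_max_iff]
    constructor
    · rintro (h | h)
      · linarith
      · linarith
    · intro h; left; linarith
  have hbound : (∫⁻ ω, ENNReal.ofReal (max (Y ω - a) 0) ∂P)
      ≤ ENNReal.ofReal (c ^ (1 - r) / (m * (r - 1))) := by
    rw [hlc, ← kemp_aux_int hcpos hmpos hr]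
    exact setLIntegral_mono' measurableSet_Ioi hptw
  -- combine
  have hkey := le_trans (le_trans (markov a hat) (hmaj a ha0)) hbound
  have htane : ENNReal.ofReal (t - a) ≠ 0 := (ENNReal.ofReal_pos.2 (by linarith)).ne'
  have hdiv : P {ω | t ≤ X ω}
      ≤ ENNReal.ofReal (c ^ (1 - r) / (m * (r - 1)) / (t - a)) := by
    rw [ENNReal.ofReal_div_of_pos (by linarith : (0:ℝ) < t - a)]
    rw [ENNReal.le_div_iff_mul_le (Or.inl htane) (Or.inl ENNReal.ofReal_ne_top)]
    rw [mul_comm]; exact hkey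
  have hxeq : u ^ (-r) = x := by
    rw [hu, ← Real.rpow_mul hx0.le, show (-(1/r)) * (-r) = 1 by field_simp,
      Real.rpow_one]
  have hfinal : c ^ (1 - r) / (m * (r - 1)) / (t - a) = (1 - 1/r) ^ (-r) * x := by
    have hta : t - a = u/(m*r) := by rw [ha]; ring
    have e1 : u ^ ((1:ℝ)-r) = x * u := by
      rw [show (1:ℝ)-r = -r + 1 by ring, Real.rpow_add hupos, Real.rpow_one, hxeq]
    have e2 : (1-1/r:ℝ) ^ ((1:ℝ)-r) = (1-1/r)^(-r) * (1-1/r) := by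
      rw [show (1:ℝ)-r = -r+1 by ring, Real.rpow_add h1r, Real.rpow_one]
    rw [hta, hc, Real.mul_rpow hupos.le h1r.le, e1, e2]
    have h5 : (0:ℝ) < r - 1 := by linarith
    field_simp
  rw [hfinal] at hdiv
  calc P {ω | t ≤ X ω}
      ≤ ENNReal.ofReal ((1-1/r)^(-r) * x) := hdiv
    _ = ENNReal.ofReal ((1-1/r)^(-r)) * ENNReal.ofReal x :=
        ENNReal.ofReal_mul (rpow_nonneg h1r.le _)
    _ = _ := by rw [hx, ENNReal.ofReal_toReal (hGfin t)]
end
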